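/- arXiv:1603.09013 — 3 statements merged into one kernel-verified Lean document; each statement's English description precedes it below -/
import Mathlib

section
/- Let 𝐢^A = (1,2,…,n)(1,2,…,n−1)⋯(1,2)(1) and set β_k = s_{i_1}⋯s_{i_{k−1}}(α_{i_k}) for 1 ≤ k ≤ N = n(n+1)/2. Then the sequence β_1, …, β_N lists each positive root α_{i,j} (1 ≤ i ≤ j ≤ n) exactly once, in lexicographic order of the index pairs: β_k = α_{i,j} precedes β_l = α_{i′,j′} if and only if i < i′, or i = i′ and j < j′. Explicitly, the induced order is α_{1,1} ≺ α_{1,2} ≺ ⋯ ≺ α_{1,n} ≺ α_{2,2} ≺ ⋯ ≺ α_{2,n} ≺ ⋯ ≺ α_{n,n}. -/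
open scoped Classical

noncomputable section

/-- Standard basis vector `e i` (1-based coordinates, ambient `ℤ^(n+1)` sits inside `ℕ → ℤ`). -/
def stdE (i : ℕ) : ℕ → ℤ := fun j => if j = i then 1 else 0

/-- Type `A_n` simple root `α_i = e_i - e_(i+1)`. -/
def alphaA (i : ℕ) : ℕ → ℤ := stdE i - stdE (i+1)

/-- Positive root `α_(i,j) = α_i + ⋯ + α_j = e_i - e_(j+1)`. -/
def rootA (i j : ℕ) : ℕ → ℤ := stdE i - stdE (j+1)

/-- `β` is a positive root of type `A_n`. -/
def PosRootA (n : ℕ) (β : ℕ → ℤ) : Prop :=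
  ∃ i j, 1 ≤ i ∧ i ≤ j ∧ j ≤ n ∧ β = rootA i j

/-- Simple transposition `s_i = (i, i+1)`. -/
def sA (i : ℕ) : Equiv.Perm ℕ := Equiv.swap i (i+1)

/-- Product `s_(i₁) ⋯ s_(i_N)` of the simple transpositions of a word. -/
def wordProdA (w : List ℕ) : Equiv.Perm ℕ := (w.map sA).prod

/-- The reversal permutation `w₀ : k ↦ n+2-k` of `{1,…,n+1}`. -/
def w0A (n : ℕ) : Equiv.Perm ℕ :=
  Function.Involutive.toPerm (fun k => if 1 ≤ k ∧ k ≤ n+1 then n+2-k else k)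
    (by intro k; dsimp only; split_ifs <;> omega)

/-- A permutation of coordinate indices acts on vectors by permuting coordinates. -/
def permAct (σ : Equiv.Perm ℕ) (v : ℕ → ℤ) : ℕ → ℤ := fun j => v (σ⁻¹ j)

/-- The induced root sequence `β_k = s_(i₁)⋯s_(i_(k-1)) (α_(i_k))` of a word (0-indexed). -/
def rootSeqA (w : List ℕ) : List (ℕ → ℤ) :=
  (List.range w.length).map fun k => permAct (wordProdA (w.take k)) (alphaA (w.getD k 0))

/-- The word `𝐢^A = (1,2,…,n)(1,2,…,n-1)⋯(1,2)(1)`. -/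
def wordA (n : ℕ) : List ℕ :=
  ((List.range n).reverse).flatMap fun m => (List.range (m+1)).map (· + 1)

/-- `w` is a reduced word for the longest element `w₀` of `S_(n+1)`. -/
def isReducedWordA (n : ℕ) (w : List ℕ) : Prop :=
  (∀ i ∈ w, 1 ≤ i ∧ i ≤ n) ∧ w.length = n * (n+1) / 2 ∧ wordProdA w = w0A n

/-- Standard inner product on `ℤ^(n+1)` (coordinates `1,…,n+1`; index `0` unused). -/
def ipA (n : ℕ) (v u : ℕ → ℤ) : ℤ := ∑ j ∈ Finset.range (n+2), v j * u j

/-- The list of positive roots `α_(i,j)` of type `A_n` in lexicographic order of `(i,j)`. -/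
def lexListA (n : ℕ) : List (ℕ → ℤ) :=
  (List.range n).flatMap fun i' => (List.range (n - i')).map fun d => rootA (i'+1) (i'+1+d)


/-! ### Auxiliary lemmas -/

def blockA (m : ℕ) : List ℕ := (List.range m).map (· + 1)

lemma wordProdA_append (u v : List ℕ) : wordProdA (u ++ v) = wordProdA u * wordProdA v := by
  simp [wordProdA]

lemma permAct_mul (σ τ : Equiv.Perm ℕ) (v : ℕ → ℤ) :
    permAct (σ * τ) v = permAct σ (permAct τ v) := by
  funext j
  simp [permAct, mul_inv_rev, Equiv.Perm.mul_apply]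

lemma permAct_stdE (σ : Equiv.Perm ℕ) (i : ℕ) : permAct σ (stdE i) = stdE (σ i) := by
  funext j
  simp only [permAct, stdE]
  congr 1
  simp only [eq_iff_iff]
  constructor
  · rintro rfl; simp
  · rintro rfl; simp

lemma permAct_rootA (σ : Equiv.Perm ℕ) (i j : ℕ) :
    permAct σ (rootA i j) = stdE (σ i) - stdE (σ (j+1)) := by
  have : permAct σ (rootA i j) = permAct σ (stdE i) - permAct σ (stdE (j+1)) := by
    funext x; simp [permAct, rootA]
  rw [this, permAct_stdE, permAct_stdE]

lemma permAct_injective (σ : Equiv.Perm ℕ) : Function.Injective (permAct σ) := by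
  intro v u h
  funext x
  have := congrFun h (σ x)
  simpa [permAct] using this

lemma blockA_succ (m : ℕ) : blockA (m+1) = blockA m ++ [m+1] := by
  simp [blockA, List.range_succ]

lemma wordProdA_blockA (m : ℕ) (j : ℕ) :
    wordProdA (blockA m) j = if j = m + 1 then 1 else if 1 ≤ j ∧ j ≤ m then j + 1 else j := by
  induction m generalizing j with
  | zero =>
    simp only [blockA, List.range_zero, List.map_nil, wordProdA, List.prod_nil,
      Equiv.Perm.coe_one, id_eq]
    split_ifs <;> omega
  | succ m ih =>
    rw [blockA_succ, wordProdA_append]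
    have hs : wordProdA [m+1] = Equiv.swap (m+1) (m+2) := by
      simp [wordProdA, sA]
    rw [hs, Equiv.Perm.mul_apply]
    rcases eq_or_ne j (m+1) with rfl | h1
    · rw [Equiv.swap_apply_left, ih]
      split_ifs <;> omega
    · rcases eq_or_ne j (m+2) with rfl | h2
      · rw [Equiv.swap_apply_right, ih]
        split_ifs <;> omega
      · rw [Equiv.swap_apply_of_ne_of_ne h1 h2, ih]
        split_ifs <;> omega

lemma rootSeqA_append (u v : List ℕ) :
    rootSeqA (u ++ v) = rootSeqA u ++ (rootSeqA v).map (permAct (wordProdA u)) := by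
  unfold rootSeqA
  rw [List.length_append, List.range_add, List.map_append, List.map_map, List.map_map]
  congr 1
  · apply List.map_congr_left
    intro k hk
    rw [List.mem_range] at hk
    rw [List.take_append_of_le_length (le_of_lt hk), List.getD_append _ _ _ _ hk]
  · apply List.map_congr_left
    intro k hk
    rw [List.mem_range] at hk
    simp only [Function.comp_apply]
    rw [List.take_append, wordProdA_append, permAct_mul,
      List.getD_append_right _ _ _ _ (Nat.le_add_right _ _), Nat.add_sub_cancel_left,
        List.take_of_length_le (Nat.le_add_right _ _)]

lemma rootSeqA_blockA (m : ℕ) :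
    rootSeqA (blockA m) = (List.range m).map fun d => rootA 1 (1+d) := by
  unfold rootSeqA
  have hlen : (blockA m).length = m := by simp [blockA]
  rw [hlen]
  apply List.map_congr_left
  intro k hk
  rw [List.mem_range] at hk
  have ht : (blockA m).take k = blockA k := by
    simp [blockA, ← List.map_take, List.take_range, Nat.min_eq_left (le_of_lt hk)]
  have hg : (blockA m).getD k 0 = k + 1 := by
    simp [blockA, List.getD_eq_getElem?_getD, hk]
  rw [ht, hg]
  have ha : alphaA (k+1) = rootA (k+1) (k+1) := rfl
  rw [ha, permAct_rootA]
  have h1 : wordProdA (blockA k) (k+1) = 1 := by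
    rw [wordProdA_blockA]; split_ifs <;> omega
  have h2 : wordProdA (blockA k) (k+1+1) = k+2 := by
    rw [wordProdA_blockA]; split_ifs <;> omega
  rw [h1, h2]
  have : 1 + k + 1 = k + 2 := by omega
  rw [rootA, this]

lemma wordA_succ (n : ℕ) : wordA (n+1) = blockA (n+1) ++ wordA n := by
  simp [wordA, blockA, List.range_succ]

lemma shiftA (n i j : ℕ) (h1 : 1 ≤ i) (h2 : i ≤ j) (h3 : j ≤ n) :
    permAct (wordProdA (blockA (n+1))) (rootA i j) = rootA (i+1) (j+1) := by
  rw [permAct_rootA]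
  have e1 : wordProdA (blockA (n+1)) i = i + 1 := by
    rw [wordProdA_blockA]; split_ifs <;> omega
  have e2 : wordProdA (blockA (n+1)) (j+1) = j + 2 := by
    rw [wordProdA_blockA]; split_ifs <;> omega
  rw [e1, e2]
  rfl

lemma lexListA_succ (n : ℕ) :
    lexListA (n+1) = ((List.range (n+1)).map fun d => rootA 1 (1+d)) ++
      (lexListA n).map (permAct (wordProdA (blockA (n+1)))) := by
  rw [lexListA, lexListA, List.range_succ_eq_map, List.flatMap_cons, List.flatMap_map,
    List.map_flatMap]
  congr 1
  · rw [Nat.sub_zero, List.range_succ_eq_map, List.map_cons]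
  · refine List.flatMap_congr fun i' hi' => ?_
    rw [List.mem_range] at hi'
    have hr : n + 1 - (i' + 1) = n - i' := by omega
    simp only [Function.comp_apply, Nat.succ_eq_add_one, hr]
    rw [List.map_map]
    apply List.map_congr_left
    intro d hd
    rw [List.mem_range] at hd
    have hd' : i' + 1 + d ≤ n := by omega
    have ha : (1:ℕ) ≤ i' + 1 := by omega
    have hb : i' + 1 ≤ i' + 1 + d := by omega
    simp only [Function.comp_apply]
    rw [shiftA n (i'+1) (i'+1+d) ha hb hd']
    rw [show i' + 1 + 1 + d = i' + 1 + d + 1 from by omega]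

lemma rootA_inj {i j i' j' : ℕ} (h1 : 1 ≤ i) (h2 : i ≤ j) (h1' : 1 ≤ i') (h2' : i' ≤ j')
    (h : rootA i j = rootA i' j') : i = i' ∧ j = j' := by
  have hi := congrFun h i
  have hj := congrFun h (j+1)
  simp only [rootA, Pi.sub_apply, stdE] at hi hj
  split_ifs at hi hj <;> omega

lemma mem_lexListA {n : ℕ} {β : ℕ → ℤ} : β ∈ lexListA n ↔ PosRootA n β := by
  simp only [lexListA, List.mem_flatMap, List.mem_map, List.mem_range, PosRootA]
  constructor
  · rintro ⟨i', hi', d, hd, rfl⟩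
    exact ⟨i'+1, i'+1+d, by omega, by omega, by omega, rfl⟩
  · rintro ⟨i, j, hh1, hh2, hh3, rfl⟩
    refine ⟨i-1, by omega, ⟨j-i, by omega, ?_⟩⟩
    have e1 : i - 1 + 1 = i := by omega
    rw [e1, show i + (j - i) = j from by omega]

lemma nodup_lexListA (n : ℕ) : (lexListA n).Nodup := by
  induction n with
  | zero => simp [lexListA]
  | succ n ih =>
    rw [lexListA_succ]
    refine List.Nodup.append ?_ ((ih.map (permAct_injective _))) ?_
    · refine List.Nodup.map_on ?_ List.nodup_range
      intro x hx y hy hxy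
      rw [List.mem_range] at hx hy
      have := rootA_inj (by omega) (by omega) (by omega) (by omega) hxy
      omega
    · intro β hb hb'
      rw [List.mem_map] at hb hb'
      obtain ⟨d, hd, rfl⟩ := hb
      rw [List.mem_range] at hd
      obtain ⟨γ, hγ, hβ⟩ := hb'
      rw [mem_lexListA] at hγ
      obtain ⟨i, j, g1, g2, g3, rfl⟩ := hγ
      rw [shiftA n i j g1 g2 g3] at hβ
      have := rootA_inj (i := i+1) (j := j+1) (i' := 1) (j' := 1+d)
        (by omega) (by omega) (by omega) (by omega) hβ
      omega

lemma rootSeqA_wordA (n : ℕ) : rootSeqA (wordA n) = lexListA n := by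
  induction n with
  | zero => rfl
  | succ n ih =>
    rw [wordA_succ, rootSeqA_append, rootSeqA_blockA, ih, lexListA_succ]

/-- The induced root sequence of `𝐢^A` lists each positive root exactly once,
in lexicographic order of the index pairs. -/
theorem statement1 (n : ℕ) (hn : 1 ≤ n) :
    (rootSeqA (wordA n)).Nodup ∧
    (∀ β, β ∈ rootSeqA (wordA n) ↔ PosRootA n β) ∧
    rootSeqA (wordA n) = lexListA n := by
  have h := rootSeqA_wordA n
  rw [h]
  exact ⟨nodup_lexListA n, fun β => mem_lexListA, rfl⟩

end
end

section
/- Papi's theorem in type A_n: the assignment sending a reduced word 𝐢 = (i_1,…,i_N) for the reversal w₀ in S_{n+1} to the total order β_1 ≺ β_2 ≺ ⋯ ≺ β_N on positive roots, where β_k = s_{i_1}⋯s_{i_{k−1}}(α_{i_k}), is a bijection from the set of reduced words for w₀ onto the set of convex total orders on the positive roots of type A_n. -/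
open scoped Classical

noncomputable section

/-- A list `L` encodes a convex total order on the positive roots of type `A_n`:
it enumerates each positive root exactly once, and whenever the entry at position `b`
is the sum of the entries at positions `a` and `c`, position `b` lies strictly between
`a` and `c`. -/
def isConvexEnumA (n : ℕ) (L : List (ℕ → ℤ)) : Prop :=
  L.Nodup ∧ (∀ β, β ∈ L ↔ PosRootA n β) ∧
  ∀ a b c : Fin L.length, L.get b = L.get a + L.get c →
    ((a < b ∧ b < c) ∨ (c < b ∧ b < a))

-- ===== auxiliary definitions =====

/-- root attached to a pair of coordinates -/
def pairRoot (pq : ℕ × ℕ) : ℕ → ℤ := stdE pq.1 - stdE pq.2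

/-- inversion pairs (in values) of a permutation -/
def invPairs (n : ℕ) (σ : Equiv.Perm ℕ) : Finset (ℕ × ℕ) :=
  (Finset.Icc 1 (n+1) ×ˢ Finset.Icc 1 (n+1)).filter fun pq =>
    pq.1 < pq.2 ∧ σ⁻¹ pq.2 < σ⁻¹ pq.1

/-- σ fixes coordinates outside [1, n+1] -/
def Fixes (n : ℕ) (σ : Equiv.Perm ℕ) : Prop :=
  ∀ j, ¬(1 ≤ j ∧ j ≤ n+1) → σ j = j

lemma mem_invPairs {n : ℕ} {σ : Equiv.Perm ℕ} {p q : ℕ} :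
    (p, q) ∈ invPairs n σ ↔ (1 ≤ p ∧ p ≤ n+1) ∧ (1 ≤ q ∧ q ≤ n+1) ∧ p < q ∧ σ⁻¹ q < σ⁻¹ p := by
  simp [invPairs, Finset.mem_filter, Finset.mem_product, Finset.mem_Icc, and_assoc]

lemma permAct_one (v : ℕ → ℤ) : permAct 1 v = v := by funext j; simp [permAct]

lemma permAct_permAct_inv (σ : Equiv.Perm ℕ) (v : ℕ → ℤ) :
    permAct σ⁻¹ (permAct σ v) = v := by
  rw [← permAct_mul, inv_mul_cancel, permAct_one]

lemma permAct_inv_permAct (σ : Equiv.Perm ℕ) (v : ℕ → ℤ) :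
    permAct σ (permAct σ⁻¹ v) = v := by
  rw [← permAct_mul, mul_inv_cancel, permAct_one]

lemma permAct_sub (σ : Equiv.Perm ℕ) (u v : ℕ → ℤ) :
    permAct σ (u - v) = permAct σ u - permAct σ v := rfl

lemma permAct_pairRoot (σ : Equiv.Perm ℕ) (p q : ℕ) :
    permAct σ (pairRoot (p, q)) = pairRoot (σ p, σ q) := by
  simp [pairRoot, permAct_sub, permAct_stdE]

lemma alphaA_eq_pairRoot (i : ℕ) : alphaA i = pairRoot (i, i+1) := rfl

/-- injectivity of sorted pair roots -/
lemma pairRoot_inj {a b c d : ℕ} (hab : a ≠ b) (hcd : c ≠ d)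
    (h : pairRoot (a, b) = pairRoot (c, d)) : a = c ∧ b = d := by
  have h1 := congrFun h a
  have h2 := congrFun h b
  simp only [pairRoot, Pi.sub_apply, stdE] at h1 h2
  constructor
  · by_contra hac
    split_ifs at h1 h2 <;> omega
  · by_contra hbd
    split_ifs at h1 h2 <;> omega

lemma stdE_sum_split {a b c d p q : ℕ} (hab : a < b) (hcd : c < d) (hpq : p < q)
    (h : pairRoot (p, q) = pairRoot (a, b) + pairRoot (c, d)) :
    (b = c ∧ p = a ∧ q = d) ∨ (d = a ∧ p = c ∧ q = b) := by
  by_cases hbc : b = c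
  · left
    refine ⟨hbc, ?_⟩
    subst hbc
    have h' : pairRoot (p, q) = pairRoot (a, d) := by
      rw [h]; unfold pairRoot; abel
    have := pairRoot_inj (by omega) (by omega) h'
    exact ⟨this.1, this.2⟩
  · by_cases hda : d = a
    · right
      refine ⟨hda, ?_⟩
      subst hda
      have h' : pairRoot (p, q) = pairRoot (c, b) := by
        rw [h]; unfold pairRoot; abel
      have := pairRoot_inj (by omega) (by omega) h'
      exact ⟨this.1, this.2⟩
    · exfalso
      have h1 := congrFun h b
      have h2 := congrFun h d
      simp only [pairRoot, Pi.add_apply, Pi.sub_apply, stdE] at h1 h2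
      split_ifs at h1 h2 <;> omega

-- ===== Fixes / swap lemmas =====

lemma Fixes.inv {n : ℕ} {σ : Equiv.Perm ℕ} (h : Fixes n σ) : Fixes n σ⁻¹ := by
  intro j hj
  have := h j hj
  conv_lhs => rw [← this]
  simp

lemma Fixes.mem_Icc {n : ℕ} {σ : Equiv.Perm ℕ} (h : Fixes n σ) {j : ℕ}
    (hj : 1 ≤ j ∧ j ≤ n+1) : 1 ≤ σ j ∧ σ j ≤ n+1 := by
  by_contra hc
  have h1 : σ (σ j) = σ j := h (σ j) hc
  have := σ.injective h1
  omega

lemma Fixes.one {n : ℕ} : Fixes n (1 : Equiv.Perm ℕ) := fun j _ => rfl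

lemma sA_apply (i x : ℕ) : sA i x = if x = i then i+1 else if x = i+1 then i else x := by
  simp [sA, Equiv.swap_apply_def]

lemma sA_inv (i : ℕ) : (sA i)⁻¹ = sA i := by simp [sA]

lemma Fixes.sA {n i : ℕ} (hi1 : 1 ≤ i) (hin : i ≤ n) : Fixes n (sA i) := by
  intro j hj
  rw [sA_apply]
  split_ifs <;> omega

lemma Fixes.mul {n : ℕ} {σ τ : Equiv.Perm ℕ} (hσ : Fixes n σ) (hτ : Fixes n τ) :
    Fixes n (σ * τ) := by
  intro j hj
  simp only [Equiv.Perm.mul_apply, hτ j hj, hσ j hj]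

lemma sA_lt_sA {i p q : ℕ} (hpq : p < q) (hne : ¬(p = i ∧ q = i + 1)) :
    sA i p < sA i q := by
  rw [sA_apply, sA_apply]
  split_ifs <;> omega

lemma sA_mem_Icc {n i x : ℕ} (hi1 : 1 ≤ i) (hin : i ≤ n) :
    (1 ≤ sA i x ∧ sA i x ≤ n+1) ↔ (1 ≤ x ∧ x ≤ n+1) := by
  rw [sA_apply]
  split_ifs <;> omega

-- ===== w0 lemmas =====

lemma w0A_apply (n k : ℕ) : w0A n k = if 1 ≤ k ∧ k ≤ n+1 then n+2-k else k := rfl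

lemma w0A_inv (n : ℕ) : (w0A n)⁻¹ = w0A n := by
  ext x
  have hinv : ∀ y, w0A n (w0A n y) = y := fun y => by
    simp only [w0A_apply]; split_ifs <;> omega
  have : w0A n ((w0A n)⁻¹ x) = w0A n (w0A n x) := by
    rw [hinv]
    simp
  exact (w0A n).injective this

lemma Fixes.w0A (n : ℕ) : Fixes n (w0A n) := by
  intro j hj
  rw [w0A_apply, if_neg hj]

lemma mem_invPairs_w0A {n p q : ℕ} :
    (p, q) ∈ invPairs n (w0A n) ↔ 1 ≤ p ∧ p < q ∧ q ≤ n+1 := by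
  rw [mem_invPairs, w0A_inv]
  simp only [w0A_apply]
  constructor
  · rintro ⟨h1, h2, h3, _⟩; omega
  · intro h
    refine ⟨by omega, by omega, by omega, ?_⟩
    rw [if_pos (by omega), if_pos (by omega)]
    omega

-- ===== step lemma: invPairs (σ * sA i) =====

lemma invPairs_mul_sA_pos {n : ℕ} {σ : Equiv.Perm ℕ} (hσ : Fixes n σ) {i : ℕ}
    (hi1 : 1 ≤ i) (hin : i ≤ n) (hlt : σ i < σ (i+1)) :
    (σ i, σ (i+1)) ∉ invPairs n σ ∧
    invPairs n (σ * sA i) = insert (σ i, σ (i+1)) (invPairs n σ) := by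
  have hii : σ⁻¹ (σ i) = i := σ.symm_apply_apply i
  have hii1 : σ⁻¹ (σ (i+1)) = i+1 := σ.symm_apply_apply (i+1)
  have hmem : 1 ≤ σ i ∧ σ i ≤ n+1 := hσ.mem_Icc ⟨by omega, by omega⟩
  have hmem1 : 1 ≤ σ (i+1) ∧ σ (i+1) ≤ n+1 := hσ.mem_Icc ⟨by omega, by omega⟩
  have hkey : ∀ p q : ℕ, (σ * sA i)⁻¹ q < (σ * sA i)⁻¹ p ↔ sA i (σ⁻¹ q) < sA i (σ⁻¹ p) := by
    intro p q
    simp [mul_inv_rev, sA_inv, Equiv.Perm.mul_apply]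
  constructor
  · rw [mem_invPairs]; omega
  · ext ⟨p, q⟩
    rw [Finset.mem_insert, mem_invPairs, mem_invPairs, hkey]
    constructor
    · rintro ⟨hp, hq, hpq, hcmp⟩
      by_cases hsp : (p, q) = (σ i, σ (i+1))
      · exact Or.inl hsp
      · right
        refine ⟨hp, hq, hpq, ?_⟩
        -- σ⁻¹ p, σ⁻¹ q not the pair (i, i+1) in the "bad" direction
        by_cases h1 : σ⁻¹ q = i ∧ σ⁻¹ p = i + 1
        · -- then p = σ (i+1), q = σ i, so q < p, contradiction with p < q
          have hq' : q = σ i := by rw [← h1.1]; simp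
          have hp' : p = σ (i+1) := by rw [← h1.2]; simp
          omega
        · have h2 : ¬(σ⁻¹ p = i ∧ σ⁻¹ q = i + 1) := by
            rintro ⟨ha, hb⟩
            apply hsp
            have : p = σ i := by rw [← ha]; simp
            have : q = σ (i+1) := by rw [← hb]; simp
            simp_all
          rw [sA_apply, sA_apply] at hcmp
          split_ifs at hcmp <;> omega
    · rintro (heq | ⟨hp, hq, hpq, hcmp⟩)
      · obtain ⟨h1, h2⟩ := Prod.mk.injEq .. ▸ heq
        subst h1; subst h2
        refine ⟨hmem, hmem1, hlt, ?_⟩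
        rw [hii, hii1, sA_apply, sA_apply]
        split_ifs <;> omega
      · refine ⟨hp, hq, hpq, ?_⟩
        have h1 : ¬(σ⁻¹ q = i ∧ σ⁻¹ p = i + 1) := by
          rintro ⟨ha, hb⟩
          have : q = σ i := by rw [← ha]; simp
          have : p = σ (i+1) := by rw [← hb]; simp
          omega
        rw [sA_apply, sA_apply]
        split_ifs <;> omega

lemma invPairs_mul_sA_neg {n : ℕ} {σ : Equiv.Perm ℕ} (hσ : Fixes n σ) {i : ℕ}
    (hi1 : 1 ≤ i) (hin : i ≤ n) (hlt : σ (i+1) < σ i) :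
    invPairs n (σ * sA i) ⊆ invPairs n σ ∧ (σ (i+1), σ i) ∈ invPairs n σ ∧
    (σ (i+1), σ i) ∉ invPairs n (σ * sA i) := by
  have hii : σ⁻¹ (σ i) = i := σ.symm_apply_apply i
  have hii1 : σ⁻¹ (σ (i+1)) = i+1 := σ.symm_apply_apply (i+1)
  have hmem : 1 ≤ σ i ∧ σ i ≤ n+1 := hσ.mem_Icc ⟨by omega, by omega⟩
  have hmem1 : 1 ≤ σ (i+1) ∧ σ (i+1) ≤ n+1 := hσ.mem_Icc ⟨by omega, by omega⟩
  have hkey : ∀ p q : ℕ, (σ * sA i)⁻¹ q < (σ * sA i)⁻¹ p ↔ sA i (σ⁻¹ q) < sA i (σ⁻¹ p) := by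
    intro p q
    simp [mul_inv_rev, sA_inv, Equiv.Perm.mul_apply]
  refine ⟨?_, ?_, ?_⟩
  · rintro ⟨p, q⟩ hpq'
    rw [mem_invPairs, hkey] at hpq'
    obtain ⟨hp, hq, hpq, hcmp⟩ := hpq'
    rw [mem_invPairs]
    refine ⟨hp, hq, hpq, ?_⟩
    by_cases h1 : σ⁻¹ p = i ∧ σ⁻¹ q = i + 1
    · have : p = σ i := by rw [← h1.1]; simp
      have : q = σ (i+1) := by rw [← h1.2]; simp
      omega
    · by_cases h2 : σ⁻¹ q = i ∧ σ⁻¹ p = i + 1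
      · omega
      · rw [sA_apply, sA_apply] at hcmp
        split_ifs at hcmp <;> omega
  · rw [mem_invPairs]; omega
  · rw [mem_invPairs, hkey, hii, hii1]
    rw [sA_apply, sA_apply]
    split_ifs <;> omega

-- ===== word products =====

lemma wordProdA_nil : wordProdA [] = 1 := rfl

lemma wordProdA_cons (i : ℕ) (w : List ℕ) : wordProdA (i :: w) = sA i * wordProdA w := by
  simp [wordProdA]

lemma wordProdA_take_succ (w : List ℕ) (k : ℕ) (hk : k < w.length) :
    wordProdA (w.take (k+1)) = wordProdA (w.take k) * sA (w.getD k 0) := by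
  have h1 : w.take (k+1) = w.take k ++ [w[k]] := by
    rw [List.take_succ, List.getElem?_eq_getElem hk]
    rfl
  rw [h1, wordProdA, wordProdA, List.map_append, List.prod_append]
  simp [wordProdA, List.getD_eq_getElem?_getD, List.getElem?_eq_getElem hk]

lemma getD_mem {w : List ℕ} {k : ℕ} (hk : k < w.length) : w.getD k 0 ∈ w := by
  rw [List.getD_eq_getElem?_getD, List.getElem?_eq_getElem hk]
  exact List.getElem_mem hk

lemma invPairs_one (n : ℕ) : invPairs n 1 = ∅ := by
  ext ⟨p, q⟩
  rw [mem_invPairs]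
  simp only [Finset.notMem_empty, iff_false]
  intro h
  simp only [inv_one, Equiv.Perm.one_apply] at h
  omega

lemma fixes_wordProdA_take {n : ℕ} {w : List ℕ} (hw : ∀ i ∈ w, 1 ≤ i ∧ i ≤ n) (k : ℕ) :
    Fixes n (wordProdA (w.take k)) := by
  induction k with
  | zero => simpa [wordProdA_nil] using Fixes.one
  | succ k ih =>
    by_cases hk : k < w.length
    · rw [wordProdA_take_succ w k hk]
      have := hw _ (getD_mem hk)
      exact ih.mul (Fixes.sA this.1 this.2)
    · rw [List.take_succ, List.getElem?_eq_none (by omega)]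
      simpa using ih

-- Gauss sum
lemma gauss_sum : ∀ m : ℕ, (∑ q ∈ Finset.Icc 1 m, (q-1)) = m*(m-1)/2 := by
  intro m
  induction m with
  | zero => simp
  | succ m ih =>
    rw [Finset.sum_Icc_succ_top (by omega), ih]
    have h2 : (m+1)*(m+1-1) = m*(m-1) + 2*m := by
      cases m with
      | zero => simp
      | succ k => simp only [Nat.add_sub_cancel]; ring
    omega

lemma card_invPairs_w0A (n : ℕ) : (invPairs n (w0A n)).card = n*(n+1)/2 := by
  have : invPairs n (w0A n) =
      (Finset.Icc 1 (n+1)).biUnion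
        (fun q => (Finset.Ico 1 q).map ⟨fun p => (p, q), fun a b h => by simpa using h⟩) := by
    ext ⟨p, q⟩
    rw [mem_invPairs_w0A]
    simp only [Finset.mem_biUnion, Finset.mem_Icc, Finset.mem_map, Finset.mem_Ico,
      Function.Embedding.coeFn_mk, Prod.mk.injEq]
    constructor
    · intro h; exact ⟨q, by omega, p, by omega, rfl⟩
    · rintro ⟨q', hq', p', hp', rfl, rfl⟩; omega
  rw [this, Finset.card_biUnion]
  · have : ∀ q ∈ Finset.Icc 1 (n+1),
        ((Finset.Ico 1 q).map ⟨fun p => (p, q), fun a b h => by simpa using h⟩).card = q - 1 := by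
      intro q _
      rw [Finset.card_map, Nat.card_Ico]
    rw [Finset.sum_congr rfl this, gauss_sum, Nat.add_sub_cancel, Nat.mul_comm]
  · intro x _ y _ hxy
    rw [Function.onFun, Finset.disjoint_left]
    rintro ⟨a, b⟩ ha hb
    simp only [Finset.mem_map, Function.Embedding.coeFn_mk, Prod.mk.injEq] at ha hb
    obtain ⟨_, _, _, rfl⟩ := ha
    obtain ⟨_, _, _, h⟩ := hb
    simp_all

-- ===== chain of inversion sets along a word =====

/-- the pair of values swapped at step `k` of the word -/
def pairAt (w : List ℕ) (k : ℕ) : ℕ × ℕ :=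
  (wordProdA (w.take k) (w.getD k 0), wordProdA (w.take k) (w.getD k 0 + 1))

lemma card_step {n : ℕ} {w : List ℕ} (hw : ∀ i ∈ w, 1 ≤ i ∧ i ≤ n) {k : ℕ}
    (hk : k < w.length) :
    (invPairs n (wordProdA (w.take (k+1)))).card ≤ (invPairs n (wordProdA (w.take k))).card + 1 := by
  have hσ : Fixes n (wordProdA (w.take k)) := fixes_wordProdA_take hw k
  have hi := hw _ (getD_mem hk)
  rw [wordProdA_take_succ w k hk]
  set σ := wordProdA (w.take k) with hσd
  set i := w.getD k 0 with hid
  rcases lt_trichotomy (σ i) (σ (i+1)) with h | h | h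
  · rw [(invPairs_mul_sA_pos hσ hi.1 hi.2 h).2]
    exact Finset.card_insert_le _ _
  · exact absurd (σ.injective h) (by omega)
  · have := Finset.card_le_card (invPairs_mul_sA_neg hσ hi.1 hi.2 h).1
    omega

lemma card_le_chain {n : ℕ} {w : List ℕ} (hw : ∀ i ∈ w, 1 ≤ i ∧ i ≤ n) :
    ∀ k, (invPairs n (wordProdA (w.take k))).card ≤ k := by
  intro k
  induction k with
  | zero => simp [wordProdA_nil, invPairs_one]
  | succ k ih =>
    by_cases hk : k < w.length
    · have := card_step hw hk
      omega
    · rw [List.take_succ, List.getElem?_eq_none (by omega)]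
      simpa using Nat.le_succ_of_le ih

lemma card_back_chain {n : ℕ} {w : List ℕ} (hw : ∀ i ∈ w, 1 ≤ i ∧ i ≤ n) :
    ∀ m k, k + m ≤ w.length →
      (invPairs n (wordProdA (w.take (k+m)))).card ≤ (invPairs n (wordProdA (w.take k))).card + m := by
  intro m
  induction m with
  | zero => intro k _; simp
  | succ m ih =>
    intro k hkm
    have h1 := ih k (by omega)
    have h2 := card_step hw (k := k + m) (by omega)
    rw [show k + (m+1) = (k+m)+1 by omega]
    omega

lemma card_eq_chain {n : ℕ} {w : List ℕ} (hw : ∀ i ∈ w, 1 ≤ i ∧ i ≤ n)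
    (hcard : (invPairs n (wordProdA w)).card = w.length) {k : ℕ} (hk : k ≤ w.length) :
    (invPairs n (wordProdA (w.take k))).card = k := by
  have h1 := card_le_chain hw k
  have h2 := card_back_chain hw (w.length - k) k (by omega)
  rw [show k + (w.length - k) = w.length by omega, List.take_length] at h2
  omega

lemma chain_facts {n : ℕ} {w : List ℕ} (hw : ∀ i ∈ w, 1 ≤ i ∧ i ≤ n)
    (hcard : (invPairs n (wordProdA w)).card = w.length) {k : ℕ} (hk : k < w.length) :
    (pairAt w k).1 < (pairAt w k).2 ∧
    pairAt w k ∉ invPairs n (wordProdA (w.take k)) ∧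
    invPairs n (wordProdA (w.take (k+1))) = insert (pairAt w k) (invPairs n (wordProdA (w.take k))) := by
  have hσ : Fixes n (wordProdA (w.take k)) := fixes_wordProdA_take hw k
  have hi := hw _ (getD_mem hk)
  have hc1 : (invPairs n (wordProdA (w.take k))).card = k := card_eq_chain hw hcard (by omega)
  have hc2 : (invPairs n (wordProdA (w.take (k+1)))).card = k+1 := card_eq_chain hw hcard (by omega)
  rw [wordProdA_take_succ w k hk] at hc2 ⊢
  set σ := wordProdA (w.take k) with hσd
  set i := w.getD k 0 with hid
  rcases lt_trichotomy (σ i) (σ (i+1)) with h | h | h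
  · obtain ⟨hnm, heq⟩ := invPairs_mul_sA_pos hσ hi.1 hi.2 h
    exact ⟨h, hnm, heq⟩
  · exact absurd (σ.injective h) (by omega)
  · exfalso
    obtain ⟨hsub, _, _⟩ := invPairs_mul_sA_neg hσ hi.1 hi.2 h
    have := Finset.card_le_card hsub
    omega

lemma chain_mono {n : ℕ} {w : List ℕ} (hw : ∀ i ∈ w, 1 ≤ i ∧ i ≤ n)
    (hcard : (invPairs n (wordProdA w)).card = w.length) :
    ∀ k, k ≤ w.length → ∀ j, j ≤ k →
      invPairs n (wordProdA (w.take j)) ⊆ invPairs n (wordProdA (w.take k)) := by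
  intro k
  induction k with
  | zero => intro _ j hj; rw [Nat.le_zero.mp hj]
  | succ k ih =>
    intro hk j hj
    rcases Nat.lt_or_ge j (k+1) with h | h
    · have h1 := ih (by omega) j (by omega)
      have h2 := (chain_facts hw hcard (k := k) (by omega)).2.2
      rw [h2]
      exact h1.trans (Finset.subset_insert _ _)
    · rw [show j = k+1 by omega]

lemma chain_cover {n : ℕ} {w : List ℕ} (hw : ∀ i ∈ w, 1 ≤ i ∧ i ≤ n)
    (hcard : (invPairs n (wordProdA w)).card = w.length) :
    ∀ k, k ≤ w.length → ∀ pq ∈ invPairs n (wordProdA (w.take k)), ∃ j < k, pq = pairAt w j := by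
  intro k
  induction k with
  | zero =>
    intro _ pq hpq
    rw [List.take_zero, wordProdA_nil, invPairs_one] at hpq
    simp at hpq
  | succ k ih =>
    intro hk pq hpq
    rw [(chain_facts hw hcard (k := k) (by omega)).2.2, Finset.mem_insert] at hpq
    rcases hpq with h | h
    · exact ⟨k, by omega, h⟩
    · obtain ⟨j, hj, hje⟩ := ih (by omega) pq h
      exact ⟨j, by omega, hje⟩

lemma pairAt_mem {n : ℕ} {w : List ℕ} (hw : ∀ i ∈ w, 1 ≤ i ∧ i ≤ n)
    (hcard : (invPairs n (wordProdA w)).card = w.length) {k : ℕ} (hk : k < w.length) :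
    pairAt w k ∈ invPairs n (wordProdA (w.take (k+1))) := by
  rw [(chain_facts hw hcard hk).2.2]
  exact Finset.mem_insert_self _ _

-- ===== closure properties of inversion sets =====

lemma invPairs_closed {n : ℕ} {σ : Equiv.Perm ℕ} {p m q : ℕ}
    (h1 : (p, m) ∈ invPairs n σ) (h2 : (m, q) ∈ invPairs n σ) : (p, q) ∈ invPairs n σ := by
  simp only [mem_invPairs] at *
  omega

lemma invPairs_cocl {n : ℕ} {σ : Equiv.Perm ℕ} {p m q : ℕ}
    (h : (p, q) ∈ invPairs n σ) (h1 : p < m) (h2 : m < q) :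
    (p, m) ∈ invPairs n σ ∨ (m, q) ∈ invPairs n σ := by
  simp only [mem_invPairs] at *
  omega

-- ===== rootSeqA basics =====

lemma rootSeqA_length (w : List ℕ) : (rootSeqA w).length = w.length := by simp [rootSeqA]

lemma rootSeqA_get (w : List ℕ) (k : ℕ) (h : k < (rootSeqA w).length) :
    (rootSeqA w).get ⟨k, h⟩ = permAct (wordProdA (w.take k)) (alphaA (w.getD k 0)) := by
  simp [rootSeqA]

lemma rootSeqA_get_eq_pairRoot (w : List ℕ) (k : ℕ) (h : k < (rootSeqA w).length) :
    (rootSeqA w).get ⟨k, h⟩ = pairRoot (pairAt w k) := by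
  rw [rootSeqA_get, alphaA_eq_pairRoot, permAct_pairRoot]
  rfl

lemma posRootA_iff {n : ℕ} {β : ℕ → ℤ} :
    PosRootA n β ↔ ∃ p q, 1 ≤ p ∧ p < q ∧ q ≤ n+1 ∧ β = pairRoot (p, q) := by
  constructor
  · rintro ⟨i, j, h1, h2, h3, rfl⟩
    exact ⟨i, j+1, by omega, by omega, by omega, rfl⟩
  · rintro ⟨p, q, h1, h2, h3, rfl⟩
    refine ⟨p, q-1, by omega, by omega, by omega, ?_⟩
    show pairRoot (p, q) = rootA p (q-1)
    unfold rootA pairRoot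
    rw [show q - 1 + 1 = q by omega]

lemma pairRoot_inj' {x y : ℕ × ℕ} (hx : x.1 ≠ x.2) (hy : y.1 ≠ y.2)
    (h : pairRoot x = pairRoot y) : x = y := by
  obtain ⟨a, b⟩ := x
  obtain ⟨c, d⟩ := y
  have := pairRoot_inj hx hy h
  simp only [Prod.mk.injEq]
  exact this

lemma perm_alpha_eq (w : List ℕ) (k : ℕ) :
    permAct (wordProdA (w.take k)) (alphaA (w.getD k 0)) = pairRoot (pairAt w k) := by
  rw [alphaA_eq_pairRoot, permAct_pairRoot]
  rfl

-- ===== MapsTo: reduced word gives convex enumeration =====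

theorem rootSeqA_convex {n : ℕ} {w : List ℕ} (hred : isReducedWordA n w) :
    isConvexEnumA n (rootSeqA w) := by
  obtain ⟨hw, hlen, hprod⟩ := hred
  have hcard : (invPairs n (wordProdA w)).card = w.length := by
    rw [hprod, card_invPairs_w0A, hlen]
  have hsorted : ∀ k, k < w.length → (pairAt w k).1 < (pairAt w k).2 :=
    fun k hk => (chain_facts hw hcard hk).1
  have hnotmem : ∀ k, k < w.length → pairAt w k ∉ invPairs n (wordProdA (w.take k)) :=
    fun k hk => (chain_facts hw hcard hk).2.1
  have hmem : ∀ k, k < w.length → pairAt w k ∈ invPairs n (wordProdA (w.take (k+1))) :=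
    fun k hk => pairAt_mem hw hcard hk
  have hpairinj : ∀ j k, j < w.length → k < w.length → pairAt w j = pairAt w k → j = k := by
    intro j k hj hk he
    rcases lt_trichotomy j k with h | h | h
    · exfalso
      have h1 : pairAt w j ∈ invPairs n (wordProdA (w.take k)) :=
        chain_mono hw hcard k (by omega) (j+1) (by omega) (hmem j hj)
      rw [he] at h1
      exact hnotmem k hk h1
    · exact h
    · exfalso
      have h1 : pairAt w k ∈ invPairs n (wordProdA (w.take j)) :=
        chain_mono hw hcard j (by omega) (k+1) (by omega) (hmem k hk)
      rw [← he] at h1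
      exact hnotmem j hj h1
  refine ⟨?_, ?_, ?_⟩
  · -- Nodup
    rw [rootSeqA]
    apply List.Nodup.map_on ?_ List.nodup_range
    intro j hj k hk hf
    rw [List.mem_range] at hj hk
    rw [perm_alpha_eq, perm_alpha_eq] at hf
    exact hpairinj j k hj hk
      (pairRoot_inj' (ne_of_lt (hsorted j hj)) (ne_of_lt (hsorted k hk)) hf)
  · -- membership
    intro β
    rw [posRootA_iff]
    constructor
    · intro hb
      rw [rootSeqA, List.mem_map] at hb
      obtain ⟨k, hk, rfl⟩ := hb
      rw [List.mem_range] at hk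
      rw [perm_alpha_eq]
      have h1 : pairAt w k ∈ invPairs n (wordProdA w) := by
        have := chain_mono hw hcard w.length le_rfl (k+1) (by omega) (hmem k hk)
        rwa [List.take_length] at this
      rw [hprod] at h1
      rcases hpa : pairAt w k with ⟨p, q⟩
      rw [hpa, mem_invPairs_w0A] at h1
      exact ⟨p, q, h1.1, h1.2.1, h1.2.2, rfl⟩
    · rintro ⟨p, q, h1, h2, h3, rfl⟩
      have hpq : (p, q) ∈ invPairs n (wordProdA (w.take w.length)) := by
        rw [List.take_length, hprod, mem_invPairs_w0A]
        exact ⟨h1, h2, h3⟩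
      obtain ⟨j, hj, hje⟩ := chain_cover hw hcard w.length le_rfl (p, q) hpq
      rw [rootSeqA, List.mem_map]
      exact ⟨j, List.mem_range.mpr hj, by rw [perm_alpha_eq, ← hje]⟩
  · -- convexity
    intro a b c habc
    have hL := rootSeqA_length w
    have ha : a.val < w.length := by have := a.isLt; omega
    have hb : b.val < w.length := by have := b.isLt; omega
    have hc : c.val < w.length := by have := c.isLt; omega
    have e1 : (rootSeqA w).get a = pairRoot (pairAt w a.val) := rootSeqA_get_eq_pairRoot w a.val a.isLt
    have e2 : (rootSeqA w).get b = pairRoot (pairAt w b.val) := rootSeqA_get_eq_pairRoot w b.val b.isLt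
    have e3 : (rootSeqA w).get c = pairRoot (pairAt w c.val) := rootSeqA_get_eq_pairRoot w c.val c.isLt
    rw [e1, e2, e3] at habc
    have key : ∀ x y bb : ℕ, x < w.length → y < w.length → bb < w.length →
        ∀ p m q : ℕ, pairAt w x = (p, m) → pairAt w y = (m, q) → pairAt w bb = (p, q) →
        (x < bb ∧ bb < y) ∨ (y < bb ∧ bb < x) := by
      intro x y bb hx hy hbb p m q hxe hye hbe
      have hpm : p < m := by have := hsorted x hx; rw [hxe] at this; exact this
      have hmq : m < q := by have := hsorted y hy; rw [hye] at this; exact this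
      have hbx : bb ≠ x := by
        intro h; rw [h, hxe] at hbe; injection hbe with h1 h2; omega
      have hby : bb ≠ y := by
        intro h; rw [h, hye] at hbe; injection hbe with h1 h2; omega
      have hnot1 : ¬(bb < x ∧ bb < y) := by
        rintro ⟨hh1, hh2⟩
        have hb1 : (p, q) ∈ invPairs n (wordProdA (w.take (bb+1))) := by
          rw [← hbe]; exact hmem bb hbb
        rcases invPairs_cocl hb1 hpm hmq with h | h
        · have h' : (p, m) ∈ invPairs n (wordProdA (w.take x)) :=
            chain_mono hw hcard x (by omega) (bb+1) (by omega) h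
          rw [← hxe] at h'
          exact hnotmem x hx h'
        · have h' : (m, q) ∈ invPairs n (wordProdA (w.take y)) :=
            chain_mono hw hcard y (by omega) (bb+1) (by omega) h
          rw [← hye] at h'
          exact hnotmem y hy h'
      have hnot2 : ¬(x < bb ∧ y < bb) := by
        rintro ⟨hh1, hh2⟩
        have hx1 : (p, m) ∈ invPairs n (wordProdA (w.take bb)) := by
          rw [← hxe]; exact chain_mono hw hcard bb (by omega) (x+1) (by omega) (hmem x hx)
        have hy1 : (m, q) ∈ invPairs n (wordProdA (w.take bb)) := by
          rw [← hye]; exact chain_mono hw hcard bb (by omega) (y+1) (by omega) (hmem y hy)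
        have := invPairs_closed hx1 hy1
        rw [← hbe] at this
        exact hnotmem bb hbb this
      omega
    rcases hpa : pairAt w a.val with ⟨a1, a2⟩
    rcases hpb : pairAt w b.val with ⟨b1, b2⟩
    rcases hpc : pairAt w c.val with ⟨c1, c2⟩
    rw [hpa, hpb, hpc] at habc
    have hsa : a1 < a2 := by have := hsorted a.val ha; rw [hpa] at this; exact this
    have hsb : b1 < b2 := by have := hsorted b.val hb; rw [hpb] at this; exact this
    have hsc : c1 < c2 := by have := hsorted c.val hc; rw [hpc] at this; exact this
    rcases stdE_sum_split hsa hsc hsb habc with ⟨h1, h2, h3⟩ | ⟨h1, h2, h3⟩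
    · have hk := key a.val c.val b.val ha hc hb b1 a2 b2
        (by rw [hpa, h2]) (by rw [hpc, ← h1, ← h3]) hpb
      simp only [Fin.lt_def]
      omega
    · have hk := key c.val a.val b.val hc ha hb b1 c2 b2
        (by rw [hpc, h2]) (by rw [hpa, ← h1, ← h3]) hpb
      simp only [Fin.lt_def]
      omega

-- ===== injectivity =====

theorem rootSeqA_injOn {n : ℕ} {w w' : List ℕ} (h : isReducedWordA n w)
    (h' : isReducedWordA n w') (he : rootSeqA w = rootSeqA w') : w = w' := by
  have hlen : w.length = w'.length := by rw [h.2.1, h'.2.1]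
  have step : ∀ k, k < w.length → wordProdA (w.take k) = wordProdA (w'.take k) →
      w.getD k 0 = w'.getD k 0 := by
    intro k hk hp
    have hk1 : k < (rootSeqA w).length := by rw [rootSeqA_length]; exact hk
    have h12 := List.get_of_eq he ⟨k, hk1⟩
    rw [rootSeqA_get] at h12
    have hk2 : k < (rootSeqA w').length := by rw [rootSeqA_length]; omega
    have h12' : permAct (wordProdA (w.take k)) (alphaA (w.getD k 0)) =
        permAct (wordProdA (w'.take k)) (alphaA (w'.getD k 0)) := by
      rw [h12]
      exact rootSeqA_get w' k hk2
    rw [← hp] at h12'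
    have h3 := permAct_injective _ h12'
    rw [alphaA_eq_pairRoot, alphaA_eq_pairRoot] at h3
    exact (pairRoot_inj (by omega) (by omega) h3).1
  have main : ∀ k, wordProdA (w.take k) = wordProdA (w'.take k) := by
    intro k
    induction k with
    | zero => rfl
    | succ k ih =>
      by_cases hk : k < w.length
      · rw [wordProdA_take_succ w k hk, wordProdA_take_succ w' k (by omega), ih, step k hk ih]
      · rw [List.take_succ, List.take_succ, List.getElem?_eq_none (l := w) (by omega),
          List.getElem?_eq_none (l := w') (by omega)]
        simpa using ih
  apply List.ext_get hlen
  intro i h1 h2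
  have := step i h1 (main i)
  rwa [List.getD_eq_getElem _ _ h1, List.getD_eq_getElem _ _ h2] at this

-- ===== helpers for surjectivity =====

lemma permAct_add (σ : Equiv.Perm ℕ) (u v : ℕ → ℤ) :
    permAct σ (u + v) = permAct σ u + permAct σ v := rfl

lemma mem_invPairs_sA_mul {n i : ℕ} (hi1 : 1 ≤ i) (hin : i ≤ n) (σ : Equiv.Perm ℕ)
    {p q : ℕ} (hpq : p < q) (hne : ¬(p = i ∧ q = i+1)) :
    ((p, q) ∈ invPairs n (sA i * σ) ↔ (sA i p, sA i q) ∈ invPairs n σ) := by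
  have hlt := sA_lt_sA hpq hne
  have hIcc : ∀ x : ℕ, (1 ≤ sA i x ∧ sA i x ≤ n+1) ↔ (1 ≤ x ∧ x ≤ n+1) :=
    fun x => sA_mem_Icc hi1 hin
  rw [mem_invPairs, mem_invPairs]
  have hinv : ∀ x : ℕ, (sA i * σ)⁻¹ x = σ⁻¹ (sA i x) := by
    intro x; simp [mul_inv_rev, sA_inv]
  rw [hinv, hinv]
  constructor
  · rintro ⟨h1, h2, _, h4⟩
    exact ⟨(hIcc p).mpr h1, (hIcc q).mpr h2, hlt, h4⟩
  · rintro ⟨h1, h2, _, h4⟩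
    exact ⟨(hIcc p).mp h1, (hIcc q).mp h2, hpq, h4⟩

lemma sA_self (i : ℕ) : sA i i = i + 1 := by rw [sA_apply]; simp

lemma sA_succ_self (i : ℕ) : sA i (i+1) = i := by rw [sA_apply]; split_ifs <;> omega

lemma sA_sA (i x : ℕ) : sA i (sA i x) = x := by
  show Equiv.swap i (i+1) (Equiv.swap i (i+1) x) = x
  exact Equiv.swap_apply_self _ _ _

lemma sA_mul_sA (i : ℕ) : sA i * sA i = 1 := by
  simp [sA]

lemma alpha_not_mem_sA_mul {n i : ℕ} {σ : Equiv.Perm ℕ}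
    (hmem : (i, i+1) ∈ invPairs n σ) : (i, i+1) ∉ invPairs n (sA i * σ) := by
  rw [mem_invPairs] at hmem ⊢
  have h1 : (sA i * σ)⁻¹ (i+1) = σ⁻¹ (sA i (i+1)) := by simp [mul_inv_rev, sA_inv]
  have h2 : (sA i * σ)⁻¹ i = σ⁻¹ (sA i i) := by simp [mul_inv_rev, sA_inv]
  rw [h1, h2, sA_self, sA_succ_self]
  omega

lemma rootSeqA_cons (i : ℕ) (w : List ℕ) :
    rootSeqA (i :: w) = alphaA i :: (rootSeqA w).map (permAct (sA i)) := by
  rw [rootSeqA, rootSeqA]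
  rw [List.length_cons, List.range_succ_eq_map, List.map_cons, List.map_map, List.map_map]
  rfl

-- ===== surjectivity =====

lemma surjAux (n : ℕ) : ∀ m (L : List (ℕ → ℤ)), L.length = m → ∀ σ : Equiv.Perm ℕ,
    Fixes n σ →
    L.Nodup →
    (∀ β, β ∈ L ↔ ∃ pq ∈ invPairs n σ, β = pairRoot pq) →
    (∀ a b c : Fin L.length, L.get b = L.get a + L.get c →
      ((a < b ∧ b < c) ∨ (c < b ∧ b < a))) →
    (∀ (a b : Fin L.length) (γ : ℕ → ℤ), PosRootA n γ →
      (∀ pq ∈ invPairs n σ, γ ≠ pairRoot pq) → L.get b = L.get a + γ → a < b) →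
    ∃ w : List ℕ, (∀ i ∈ w, 1 ≤ i ∧ i ≤ n) ∧ w.length = L.length ∧
      wordProdA w = σ ∧ rootSeqA w = L := by
  intro m
  induction m using Nat.strong_induction_on with
  | _ m ih =>
  intro L hLm σ hfix hnd hmem hconv hC2
  rcases L with _ | ⟨β, T⟩
  · -- empty list: σ = 1
    have hemp : invPairs n σ = ∅ := by
      rcases Finset.eq_empty_or_nonempty (invPairs n σ) with h | ⟨pq, hpq⟩
      · exact h
      · exact absurd ((hmem (pairRoot pq)).mpr ⟨pq, hpq, rfl⟩) List.not_mem_nil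
    have hmono : ∀ p q : ℕ, 1 ≤ p → p < q → q ≤ n+1 → σ⁻¹ p < σ⁻¹ q := by
      intro p q h1 h2 h3
      have hno : (p, q) ∉ invPairs n σ := by rw [hemp]; exact Finset.notMem_empty _
      rw [mem_invPairs] at hno
      have hne : σ⁻¹ p ≠ σ⁻¹ q := fun hh => by
        have := (Equiv.injective σ⁻¹) hh; omega
      omega
    have hge : ∀ p : ℕ, 1 ≤ p → p ≤ n+1 → p ≤ σ⁻¹ p := by
      intro p
      induction p with
      | zero => omega
      | succ p ihp =>
        intro _ h2
        by_cases hp : 1 ≤ p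
        · have ha := ihp hp (by omega)
          have hb := hmono p (p+1) hp (by omega) h2
          omega
        · have h0 : σ⁻¹ 0 = 0 := hfix.inv 0 (by omega)
          have : σ⁻¹ (p+1) ≠ 0 := fun hh => by
            have := (Equiv.injective σ⁻¹) (hh.trans h0.symm); omega
          omega
    have hle : ∀ t p : ℕ, p = n+1-t → 1 ≤ p → σ⁻¹ p ≤ p := by
      intro t
      induction t with
      | zero =>
        intro p hp h1
        have := (hfix.inv).mem_Icc (j := p) ⟨h1, by omega⟩
        omega
      | succ t iht =>
        intro p hp h1
        by_cases h2 : p + 1 ≤ n+1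
        · have ha := iht (p+1) (by omega) (by omega)
          have hb := hmono p (p+1) h1 (by omega) h2
          omega
        · have := (hfix.inv).mem_Icc (j := p) ⟨h1, by omega⟩
          omega
    have hid : ∀ p, σ⁻¹ p = p := by
      intro p
      by_cases hp : 1 ≤ p ∧ p ≤ n+1
      · have h1 := hge p hp.1 hp.2
        have h2 := hle (n+1-p) p (by omega) hp.1
        omega
      · exact hfix.inv p hp
    have hσ1 : σ = 1 := by
      have hinv1 : σ⁻¹ = 1 := Equiv.ext hid
      rw [← inv_inv σ, hinv1, inv_one]
    exact ⟨[], by simp, rfl, by rw [wordProdA_nil, hσ1], rfl⟩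
  · -- cons case
    obtain ⟨⟨p, q⟩, hpq, hβe⟩ := (hmem β).mp List.mem_cons_self
    have hpq' := mem_invPairs.mp hpq
    have h0get : (β :: T).get ⟨0, by simp⟩ = β := rfl
    -- first entry is a simple root
    have hq : q = p + 1 := by
      by_contra hqne
      have hm1 : p < p+1 := by omega
      have hm2 : p+1 < q := by omega
      have hsum : β = pairRoot (p, p+1) + pairRoot (p+1, q) := by
        rw [hβe]
        unfold pairRoot
        abel
      by_cases hboth : (p, p+1) ∈ invPairs n σ ∧ (p+1, q) ∈ invPairs n σ
      · obtain ⟨ia, hia⟩ := List.mem_iff_get.mp ((hmem _).mpr ⟨_, hboth.1, rfl⟩)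
        obtain ⟨ic, hic⟩ := List.mem_iff_get.mp ((hmem _).mpr ⟨_, hboth.2, rfl⟩)
        have hcv := hconv ia ⟨0, by simp⟩ ic (by rw [h0get, hia, hic]; exact hsum)
        simp only [Fin.lt_def] at hcv
        omega
      · rcases invPairs_cocl hpq hm1 hm2 with h | h
        · have h2 : (p+1, q) ∉ invPairs n σ := fun hh => hboth ⟨h, hh⟩
          have hγpos : PosRootA n (pairRoot (p+1, q)) :=
            posRootA_iff.mpr ⟨p+1, q, by omega, by omega, by omega, rfl⟩
          have hγnot : ∀ pq' ∈ invPairs n σ, pairRoot (p+1, q) ≠ pairRoot pq' := by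
            rintro ⟨x, y⟩ hxy hh
            have hxy' := mem_invPairs.mp hxy
            obtain ⟨rfl, rfl⟩ := pairRoot_inj (by omega) (by omega) hh
            exact h2 hxy
          obtain ⟨ia, hia⟩ := List.mem_iff_get.mp ((hmem _).mpr ⟨_, h, rfl⟩)
          have := hC2 ia ⟨0, by simp⟩ (pairRoot (p+1, q)) hγpos hγnot
            (by rw [h0get, hia]; exact hsum)
          simp only [Fin.lt_def] at this
          omega
        · have h2 : (p, p+1) ∉ invPairs n σ := fun hh => hboth ⟨hh, h⟩
          have hγpos : PosRootA n (pairRoot (p, p+1)) :=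
            posRootA_iff.mpr ⟨p, p+1, by omega, by omega, by omega, rfl⟩
          have hγnot : ∀ pq' ∈ invPairs n σ, pairRoot (p, p+1) ≠ pairRoot pq' := by
            rintro ⟨x, y⟩ hxy hh
            have hxy' := mem_invPairs.mp hxy
            obtain ⟨rfl, rfl⟩ := pairRoot_inj (by omega) (by omega) hh
            exact h2 hxy
          obtain ⟨ia, hia⟩ := List.mem_iff_get.mp ((hmem _).mpr ⟨_, h, rfl⟩)
          have := hC2 ia ⟨0, by simp⟩ (pairRoot (p, p+1)) hγpos hγnot
            (by rw [h0get, hia, add_comm]; exact hsum)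
          simp only [Fin.lt_def] at this
          omega
    subst hq
    have hi1 : 1 ≤ p := hpq'.1.1
    have hin : p ≤ n := by omega
    have hβα : β = alphaA p := by rw [hβe, alphaA_eq_pairRoot]
    have hβnotT : β ∉ T := (List.nodup_cons.mp hnd).1
    set σ' := sA p * σ with hσ'd
    have hfix' : Fixes n σ' := (Fixes.sA hi1 hin).mul hfix
    set L' := T.map (permAct (sA p)) with hL'd
    have hinvol : ∀ v : ℕ → ℤ, permAct (sA p) (permAct (sA p) v) = v := by
      intro v
      rw [← permAct_mul, sA_mul_sA, permAct_one]
    have hmm := fun (x y : ℕ) => mem_invPairs_sA_mul hi1 hin σ (p := x) (q := y)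
    have hαnot : (p, p+1) ∉ invPairs n σ' := alpha_not_mem_sA_mul hpq
    -- membership for L'
    have hmem' : ∀ β', β' ∈ L' ↔ ∃ pq ∈ invPairs n σ', β' = pairRoot pq := by
      intro β'
      constructor
      · intro hb
        rw [hL'd, List.mem_map] at hb
        obtain ⟨γ, hγT, rfl⟩ := hb
        obtain ⟨⟨x, y⟩, hxy, rfl⟩ := (hmem γ).mp (List.mem_cons_of_mem _ hγT)
        have hxy' := mem_invPairs.mp hxy
        have hne : ¬(x = p ∧ y = p+1) := by
          rintro ⟨rfl, rfl⟩
          exact hβnotT (hβe ▸ hγT)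
        have hxy2 : sA p x < sA p y := sA_lt_sA hxy'.2.2.1 hne
        have hne2 : ¬(sA p x = p ∧ sA p y = p+1) := by
          rintro ⟨h1, h2⟩
          have e1 : x = p + 1 := by rw [← sA_sA p x, h1, sA_self]
          have e2 : y = p := by rw [← sA_sA p y, h2, sA_succ_self]
          omega
        refine ⟨(sA p x, sA p y), ?_, ?_⟩
        · rw [hmm _ _ hxy2 hne2, sA_sA, sA_sA]
          exact hxy
        · rw [permAct_pairRoot]
      · rintro ⟨⟨x, y⟩, hxy, rfl⟩
        have hxy' := mem_invPairs.mp hxy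
        have hne : ¬(x = p ∧ y = p+1) := by rintro ⟨rfl, rfl⟩; exact hαnot hxy
        have h1 := (hmm x y hxy'.2.2.1 hne).mp hxy
        have h2 : pairRoot (x, y) = permAct (sA p) (pairRoot (sA p x, sA p y)) := by
          rw [permAct_pairRoot, sA_sA, sA_sA]
        have h3 : pairRoot (sA p x, sA p y) ∈ (β :: T) := (hmem _).mpr ⟨_, h1, rfl⟩
        rcases List.mem_cons.mp h3 with h4 | h4
        · exfalso
          have hslt : sA p x < sA p y := sA_lt_sA hxy'.2.2.1 hne
          have := pairRoot_inj (by omega) (by omega) (h4.trans hβe)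
          obtain ⟨e1, e2⟩ := this
          have e3 : x = p + 1 := by rw [← sA_sA p x, e1, sA_self]
          have e4 : y = p := by rw [← sA_sA p y, e2, sA_succ_self]
          omega
        · rw [hL'd, List.mem_map]
          exact ⟨_, h4, h2.symm⟩
    have hnd' : L'.Nodup := (List.nodup_cons.mp hnd).2.map (permAct_injective _)
    have hlen' : L'.length = T.length := by rw [hL'd, List.length_map]
    -- get relation
    have e : ∀ (x : Fin L'.length), permAct (sA p) (L'.get x) =
        (β :: T).get ⟨x.val + 1, by simp only [List.length_cons]; have := x.isLt; omega⟩ := by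
      intro x
      have h1 : L'.get x = permAct (sA p) (T.get ⟨x.val, by
          have := x.isLt; have h2 := hlen'; omega⟩) := by
        simp only [List.get_eq_getElem]
        exact List.getElem_map _
      rw [h1, hinvol]
      rfl
    -- convexity for L'
    have hconv' : ∀ a b c : Fin L'.length, L'.get b = L'.get a + L'.get c →
        ((a < b ∧ b < c) ∨ (c < b ∧ b < a)) := by
      intro a b c h
      have h2 : permAct (sA p) (L'.get b) = permAct (sA p) (L'.get a) + permAct (sA p) (L'.get c) := by
        rw [h, permAct_add]
      rw [e a, e b, e c] at h2
      have := hconv _ _ _ h2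
      simp only [Fin.lt_def] at this ⊢
      omega
    -- C2 for L'
    have hC2' : ∀ (a b : Fin L'.length) (γ : ℕ → ℤ), PosRootA n γ →
        (∀ pq ∈ invPairs n σ', γ ≠ pairRoot pq) → L'.get b = L'.get a + γ → a < b := by
      intro a b γ hγ hγn h
      obtain ⟨x, y, hx1, hxy, hy1, rfl⟩ := posRootA_iff.mp hγ
      have h2 : permAct (sA p) (L'.get b) =
          permAct (sA p) (L'.get a) + permAct (sA p) (pairRoot (x, y)) := by
        rw [h, permAct_add]
      rw [e a, e b, permAct_pairRoot] at h2
      by_cases hxyp : x = p ∧ y = p+1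
      · rw [hxyp.1, hxyp.2] at h2
        have hneg : pairRoot (sA p p, sA p (p+1)) = -β := by
          rw [sA_self, sA_succ_self, hβe]
          unfold pairRoot
          abel
        rw [hneg] at h2
        have h' : (β :: T).get ⟨a.val + 1, by simp only [List.length_cons]; have := a.isLt; omega⟩ =
            (β :: T).get ⟨b.val + 1, by simp only [List.length_cons]; have := b.isLt; omega⟩ +
            (β :: T).get ⟨0, by simp⟩ := by
          rw [h0get, h2]
          abel
        have := hconv _ _ _ h'
        simp only [Fin.lt_def] at this ⊢
        omega
      · have hslt : sA p x < sA p y := sA_lt_sA hxy hxyp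
        have hIcx := (sA_mem_Icc (n := n) (i := p) (x := x) hi1 hin).mpr ⟨hx1, by omega⟩
        have hIcy := (sA_mem_Icc (n := n) (i := p) (x := y) hi1 hin).mpr ⟨by omega, hy1⟩
        have hγn2 : ∀ pq ∈ invPairs n σ, pairRoot (sA p x, sA p y) ≠ pairRoot pq := by
          rintro ⟨u, v⟩ huv hh
          have huv' := mem_invPairs.mp huv
          obtain ⟨e1, e2⟩ := pairRoot_inj (by omega) (by omega) hh
          refine hγn (x, y) ?_ rfl
          rw [hmm x y hxy hxyp, e1, e2]
          exact huv
        have hγpos2 : PosRootA n (pairRoot (sA p x, sA p y)) :=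
          posRootA_iff.mpr ⟨_, _, hIcx.1, hslt, hIcy.2, rfl⟩
        have := hC2 _ _ _ hγpos2 hγn2 h2
        simp only [Fin.lt_def] at this ⊢
        omega
    -- recurse
    have hTm : T.length < m := by
      rw [← hLm]
      simp
    obtain ⟨w', hw'1, hw'2, hw'3, hw'4⟩ := ih T.length hTm L' (by rw [hlen']) σ' hfix'
      hnd' hmem' hconv' hC2'
    refine ⟨p :: w', ?_, ?_, ?_, ?_⟩
    · intro i hi
      rcases List.mem_cons.mp hi with rfl | hi
      · exact ⟨hi1, hin⟩
      · exact hw'1 i hi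
    · simp only [List.length_cons, hw'2, hlen']
    · rw [wordProdA_cons, hw'3, hσ'd, ← mul_assoc, sA_mul_sA, one_mul]
    · rw [rootSeqA_cons, hw'4, hL'd, List.map_map, ← hβα]
      congr 1
      calc T.map (permAct (sA p) ∘ permAct (sA p)) = T.map id := by
            apply List.map_congr_left
            intro x _
            exact hinvol x
        _ = T := List.map_id T


/-- Papi's theorem in type `A_n`. The map sending a reduced word for `w₀`
to its induced order on positive roots is a bijection from the set of reduced words for `w₀`
onto the set of convex total orders on the positive roots. -/
theorem statement2 (n : ℕ) (hn : 1 ≤ n) :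
    Set.BijOn rootSeqA {w | isReducedWordA n w} {L | isConvexEnumA n L} := by
  refine ⟨?_, ?_, ?_⟩
  · intro w hw
    exact rootSeqA_convex hw
  · intro w hw w' hw' he
    exact rootSeqA_injOn hw hw' he
  · intro L hL
    obtain ⟨hnd, hmem, hconv⟩ := hL
    have hmem' : ∀ β, β ∈ L ↔ ∃ pq ∈ invPairs n (w0A n), β = pairRoot pq := by
      intro β
      rw [hmem β, posRootA_iff]
      constructor
      · rintro ⟨p, q, h1, h2, h3, rfl⟩
        exact ⟨(p, q), mem_invPairs_w0A.mpr ⟨h1, h2, h3⟩, rfl⟩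
      · rintro ⟨⟨p, q⟩, hpq, rfl⟩
        have := mem_invPairs_w0A.mp hpq
        exact ⟨p, q, this.1, this.2.1, this.2.2, rfl⟩
    have hC2 : ∀ (a b : Fin L.length) (γ : ℕ → ℤ), PosRootA n γ →
        (∀ pq ∈ invPairs n (w0A n), γ ≠ pairRoot pq) → L.get b = L.get a + γ → a < b := by
      intro a b γ hγ hnot _
      exfalso
      obtain ⟨p, q, h1, h2, h3, rfl⟩ := posRootA_iff.mp hγ
      exact hnot (p, q) (mem_invPairs_w0A.mpr ⟨h1, h2, h3⟩) rfl
    obtain ⟨w, hw1, hw2, hw3, hw4⟩ :=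
      surjAux n L.length L rfl (w0A n) (Fixes.w0A n) hnd hmem' hconv hC2
    have hLlen : L.length = n*(n+1)/2 := by
      have htf : L.toFinset = (invPairs n (w0A n)).image pairRoot := by
        ext β
        rw [List.mem_toFinset, hmem' β, Finset.mem_image]
        constructor
        · rintro ⟨pq, h, rfl⟩; exact ⟨pq, h, rfl⟩
        · rintro ⟨pq, h, rfl⟩; exact ⟨pq, h, rfl⟩
      have hcard1 : L.toFinset.card = L.length := List.toFinset_card_of_nodup hnd
      have hinj : Set.InjOn pairRoot (invPairs n (w0A n)) := by
        rintro ⟨p, q⟩ hp ⟨u, v⟩ hu he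
        have h1 := mem_invPairs_w0A.mp (Finset.mem_coe.mp hp)
        have h2 := mem_invPairs_w0A.mp (Finset.mem_coe.mp hu)
        exact pairRoot_inj' (by simp; omega) (by simp; omega) he
      have hcard2 : ((invPairs n (w0A n)).image pairRoot).card = (invPairs n (w0A n)).card :=
        Finset.card_image_of_injOn hinj
      rw [← hcard1, htf, hcard2, card_invPairs_w0A]
    exact ⟨w, ⟨hw1, hw2.trans hLlen, hw3⟩, hw4⟩


end
end

section
/- Let 𝐢 be a reduced word for w₀ in S_{n+1} that is i-semi-adapted, with data η_1, …, η_k and ν_1, …, ν_k. Then every sequence of braid moves allowed by the definition of i-semi-adaptedness taking 𝐢 to a word whose first letter is i contains exactly k 3-term braid moves, and for each 1 ≤ m ≤ k the m-th 3-term braid move (in order of application) occurs at a position where the three consecutive induced roots of the current word are (η_{k+1−m}, ν_{k+1−m}, α_i); that is, the 3-term braid moves occur at the root triples (η_k, ν_k, α_i), then (η_{k−1}, ν_{k−1}, α_i), …, then (η_1, ν_1, α_i). -/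
open scoped Classical

noncomputable section

/-- A braid move: `two k` interchanges the letters at positions `k, k+1`;
`three k` replaces the letters `(a, b, a)` at positions `k, k+1, k+2` by `(b, a, b)`. -/
inductive BraidMove where
  | two (k : ℕ)
  | three (k : ℕ)

/-- The effect of a braid move on a word. -/
def moveWord (w : List ℕ) : BraidMove → List ℕ
  | .two k => (w.set k (w.getD (k+1) 0)).set (k+1) (w.getD k 0)
  | .three k => ((w.set k (w.getD (k+1) 0)).set (k+1) (w.getD k 0)).set (k+2) (w.getD (k+1) 0)

/-- Validity of a braid move on a word, in type `A`: a 2-term move needs letters at distance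
`≥ 2`, a 3-term move needs the pattern `(a, b, a)` with `|a - b| = 1`. -/
def moveOKA (w : List ℕ) : BraidMove → Prop
  | .two k => k + 1 < w.length ∧
      (w.getD k 0 + 2 ≤ w.getD (k+1) 0 ∨ w.getD (k+1) 0 + 2 ≤ w.getD k 0)
  | .three k => k + 2 < w.length ∧ w.getD (k+2) 0 = w.getD k 0 ∧
      (w.getD k 0 + 1 = w.getD (k+1) 0 ∨ w.getD (k+1) 0 + 1 = w.getD k 0)

/-- The semi-adaptedness condition for the letter `i`: any 3-term braid move must be applied
where the three consecutive induced roots are `(β, β + α_i, α_i)`. -/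
def semiCondA (i : ℕ) (w : List ℕ) : BraidMove → Prop
  | .two _ => True
  | .three k =>
      (rootSeqA w).getD (k+1) 0 = (rootSeqA w).getD k 0 + alphaA i ∧
      (rootSeqA w).getD (k+2) 0 = alphaA i

/-- Validity of a sequence of braid moves, each allowed by `i`-semi-adaptedness. -/
def validSeqA (i : ℕ) : List ℕ → List BraidMove → Prop
  | _, [] => True
  | w, m :: σ => moveOKA w m ∧ semiCondA i w m ∧ validSeqA i (moveWord w m) σ

/-- The word obtained by applying a sequence of braid moves. -/
def applyMovesWord (w : List ℕ) (σ : List BraidMove) : List ℕ := σ.foldl moveWord w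

/-- `w` is `i`-semi-adapted: some sequence of braid moves allowed by `i`-semi-adaptedness
takes `w` to a word whose first letter is `i`. -/
def SemiAdaptedA (i : ℕ) (w : List ℕ) : Prop :=
  ∃ σ : List BraidMove, validSeqA i w σ ∧ (applyMovesWord w σ).getD 0 0 = i

/-- The effect of a braid move on Lusztig data (tuples, recorded as lists of naturals):
a 2-term move keeps entries attached to their roots; a 3-term move applies Lusztig's
piecewise-linear map `(c₁,c₂,c₃) ↦ (max(c₂,c₁+c₂-c₃), min(c₁,c₃), max(c₂,c₂+c₃-c₁))`. -/
def moveData (c : List ℕ) : BraidMove → List ℕ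
  | .two k => (c.set k (c.getD (k+1) 0)).set (k+1) (c.getD k 0)
  | .three k =>
      ((c.set k (max (c.getD (k+1) 0) (c.getD k 0 + c.getD (k+1) 0 - c.getD (k+2) 0))).set
          (k+1) (min (c.getD k 0) (c.getD (k+2) 0))).set
          (k+2) (max (c.getD (k+1) 0) (c.getD (k+1) 0 + c.getD (k+2) 0 - c.getD k 0))

/-- The composite transition map `R_σ` on Lusztig data for a sequence `σ` of braid moves. -/
def Rdata (σ : List BraidMove) (c : List ℕ) : List ℕ := σ.foldl moveData c

/-- The inverse `R_σ⁻¹`: since each single-move transition map is an involution, the inverse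
of `R_σ` applies the single-move maps in the reverse order. -/
def RdataInv (σ : List BraidMove) (c : List ℕ) : List ℕ := σ.reverse.foldl moveData c

/-- One step of bracket cancellation, on labeled brackets (`true` = '(' , `false` = ')').
The state is `(labels of uncanceled ')', stack of currently open '(')`. -/
def brStep {α : Type*} (st : List α × List α) (x : Bool × α) : List α × List α :=
  match x with
  | (true, lab) => (st.1, lab :: st.2)
  | (false, lab) =>
    match st.2 with
    | [] => (lab :: st.1, [])
    | _ :: rest => (st.1, rest)

/-- Sequentially cancel adjacent `()` pairs in a labeled bracket string; returns the labels
of the uncanceled ')'s (head = rightmost) and of the uncanceled '('s (head = rightmost). -/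
def brReduce {α : Type*} (l : List (Bool × α)) : List α × List α := l.foldl brStep ([], [])

/-- The label of the leftmost uncanceled '(' in a labeled bracket string, if any. -/
def brLeftOpen {α : Type*} (l : List (Bool × α)) : Option α := (brReduce l).2.getLast?

/-- The label of the rightmost uncanceled ')' in a labeled bracket string, if any. -/
def brRightClose {α : Type*} (l : List (Bool × α)) : Option α := (brReduce l).1.head?

/-- The roots `η₁, …, η_k`: those prior to `α_i` in the induced order of `w` with
`(α_i | η) < 0`, in order (as a 0-indexed list). -/
def etaListA (n i : ℕ) (w : List ℕ) : List (ℕ → ℤ) :=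
  ((rootSeqA w).takeWhile fun β => decide (β ≠ alphaA i)).filter
    fun η => decide (ipA n (alphaA i) η < 0)

/-- The bracket string `S_i^𝐢(𝐜)`: for each `j`, `c_(ν_(j+1))` ')'s labeled `j` followed by
`c_(η_(j+1))` '('s labeled `j`, and finally `c_(α_i)` ')'s labeled `k`. Here `ν = η + α_i`. -/
def brStringA (n i : ℕ) (w : List ℕ) (c : (ℕ → ℤ) → ℕ) : List (Bool × ℕ) :=
  ((List.range (etaListA n i w).length).flatMap fun j =>
    List.replicate (c ((etaListA n i w).getD j 0 + alphaA i)) (false, j) ++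
    List.replicate (c ((etaListA n i w).getD j 0)) (true, j)) ++
  List.replicate (c (alphaA i)) (false, (etaListA n i w).length)

/-- Lusztig data of a Kostant partition `𝐜` with respect to the word `w`: the values of `𝐜`
read along the induced root order of `w`. -/
def lusDataA (w : List ℕ) (c : (ℕ → ℤ) → ℕ) : List ℕ := (rootSeqA w).map c

/-- Add `1` to the entry in position 1 of a Lusztig datum. -/
def inc1 (c : List ℕ) : List ℕ := c.set 0 (c.getD 0 0 + 1)

/-- Subtract `1` from the entry in position 1 of a Lusztig datum. -/
def dec1 (c : List ℕ) : List ℕ := c.set 0 (c.getD 0 0 - 1)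

/-- The list of root triples `(β_k, β_(k+1), β_(k+2))` (for the word current at the time of
application) at which the 3-term braid moves of a move sequence are applied, in order. -/
def threeTriplesA : List ℕ → List BraidMove → List ((ℕ → ℤ) × (ℕ → ℤ) × (ℕ → ℤ))
  | _, [] => []
  | w, BraidMove.two k :: σ => threeTriplesA (moveWord w (.two k)) σ
  | w, BraidMove.three k :: σ =>
      ((rootSeqA w).getD k 0, (rootSeqA w).getD (k+1) 0, (rootSeqA w).getD (k+2) 0) ::
        threeTriplesA (moveWord w (.three k)) σ

namespace St9
open List

/-- pair root `e_{p.1} - e_{p.2}` -/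
def vr (p : ℕ × ℕ) : ℕ → ℤ := stdE p.1 - stdE p.2

lemma vr_apply (p : ℕ × ℕ) (j : ℕ) :
    vr p j = (if j = p.1 then 1 else 0) - (if j = p.2 then 1 else 0) := rfl

lemma alphaA_eq_vr (i : ℕ) : alphaA i = vr (i, i+1) := rfl

lemma vr_inj {p q : ℕ × ℕ} (hp : p.1 ≠ p.2) (hq : q.1 ≠ q.2) (h : vr p = vr q) : p = q := by
  have h1 := congrFun h p.1
  have h2 := congrFun h p.2
  simp only [vr_apply] at h1 h2
  have : p.1 = q.1 ∧ p.2 = q.2 := by split_ifs at h1 h2 <;> omega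
  exact Prod.ext this.1 this.2

lemma vr_add (x y z : ℕ) : vr (x, y) + vr (y, z) = vr (x, z) := by
  funext j
  simp only [Pi.add_apply, vr_apply]
  split_ifs <;> omega

lemma vr_add_alpha {x i : ℕ} : vr (x, i) + alphaA i = vr (x, i+1) := by
  rw [alphaA_eq_vr]; exact vr_add x i (i+1)

lemma vr_add_alpha' {y i : ℕ} : vr (i+1, y) + alphaA i = vr (i, y) := by
  funext j
  simp only [Pi.add_apply, vr_apply, alphaA_eq_vr]
  split_ifs <;> omega

lemma sA_comm {a b : ℕ} (h : a + 2 ≤ b ∨ b + 2 ≤ a) : sA a * sA b = sA b * sA a := by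
  ext x
  simp only [sA, Equiv.Perm.mul_apply, Equiv.swap_apply_def]
  split_ifs <;> omega

lemma sA_braid_succ (a : ℕ) : sA a * sA (a+1) * sA a = sA (a+1) * sA a * sA (a+1) := by
  have h1 := Equiv.swap_mul_swap_mul_swap (x := a+2) (y := a+1) (z := a)
    (by omega) (by omega)
  have h2 := Equiv.swap_mul_swap_mul_swap (x := a) (y := a+1) (z := a+2)
    (by omega) (by omega)
  rw [Equiv.swap_comm (a+1) a, Equiv.swap_comm (a+2) (a+1)] at h1
  rw [Equiv.swap_comm (a+2) a] at h2
  show Equiv.swap a (a+1) * Equiv.swap (a+1) (a+2) * Equiv.swap a (a+1)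
      = Equiv.swap (a+1) (a+2) * Equiv.swap a (a+1) * Equiv.swap (a+1) (a+2)
  rw [h1, h2]

lemma sA_braid {a b : ℕ} (h : a + 1 = b ∨ b + 1 = a) :
    sA a * sA b * sA a = sA b * sA a * sA b := by
  rcases h with h | h
  · subst h; exact sA_braid_succ a
  · subst h; exact (sA_braid_succ b).symm

lemma sA_apply_of_ne {a x : ℕ} (h1 : x ≠ a) (h2 : x ≠ a + 1) : sA a x = x := by
  simp [sA, Equiv.swap_apply_def, h1, h2]

lemma wordProdA_nil : wordProdA [] = 1 := rfl

lemma wordProdA_cons (a : ℕ) (w : List ℕ) : wordProdA (a :: w) = sA a * wordProdA w := by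
  simp [wordProdA]

lemma wordProdA_append (v w : List ℕ) :
    wordProdA (v ++ w) = wordProdA v * wordProdA w := by
  simp [wordProdA]

/-- partial products -/
def uW (w : List ℕ) (k : ℕ) : Equiv.Perm ℕ := wordProdA (w.take k)

/-- the value pair crossed at step `k` -/
def pA (w : List ℕ) (k : ℕ) : ℕ × ℕ := (uW w k (w.getD k 0), uW w k (w.getD k 0 + 1))

lemma uW_zero (w : List ℕ) : uW w 0 = 1 := rfl

lemma uW_succ {w : List ℕ} {k : ℕ} (h : k < w.length) :
    uW w (k+1) = uW w k * sA (w.getD k 0) := by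
  have : w.take (k+1) = w.take k ++ [w.getD k 0] := by
    rw [List.take_succ]
    congr 1
    rw [List.getD_eq_getElem?_getD, List.getElem?_eq_getElem h]
    rfl
  rw [uW, this, wordProdA_append, uW]
  simp [wordProdA]

end St9
namespace St9

lemma permAct_alphaA (u : Equiv.Perm ℕ) (a : ℕ) :
    permAct u (alphaA a) = vr (u a, u (a+1)) := by
  funext j
  simp only [permAct, alphaA, vr, stdE, Pi.sub_apply, Equiv.Perm.inv_eq_iff_eq]

lemma rootSeqA_length (w : List ℕ) : (rootSeqA w).length = w.length := by simp [rootSeqA]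

lemma rootSeqA_getD {w : List ℕ} {k : ℕ} (h : k < w.length) :
    (rootSeqA w).getD k 0 = vr (pA w k) := by
  rw [rootSeqA, List.getD_eq_getElem?_getD, List.getElem?_eq_getElem (by simpa using h)]
  simp [permAct_alphaA, pA, uW]

def lettersLE (n : ℕ) (w : List ℕ) : Prop := ∀ a ∈ w, 1 ≤ a ∧ a ≤ n

lemma sA_range {n a : ℕ} (ha : 1 ≤ a) (ha2 : a ≤ n) (y : ℕ) :
    1 ≤ sA a y ∧ sA a y ≤ n+1 ↔ 1 ≤ y ∧ y ≤ n+1 := by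
  simp only [sA, Equiv.swap_apply_def]
  split_ifs <;> omega

lemma wordProdA_range {n : ℕ} {w : List ℕ} (hw : lettersLE n w) (x : ℕ) :
    1 ≤ wordProdA w x ∧ wordProdA w x ≤ n+1 ↔ 1 ≤ x ∧ x ≤ n+1 := by
  induction w with
  | nil => simp [wordProdA_nil]
  | cons a w ih =>
    have ha := hw a (by simp)
    have hx := ih (fun b hb => hw b (by simp [hb]))
    rw [wordProdA_cons]
    simp only [Equiv.Perm.mul_apply]
    rw [sA_range ha.1 ha.2]
    exact hx

def pairsF (n : ℕ) : Finset (ℕ × ℕ) :=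
  (Finset.Icc 1 (n+1) ×ˢ Finset.Icc 1 (n+1)).filter fun p => p.1 < p.2

lemma mem_pairsF {n : ℕ} {p : ℕ × ℕ} :
    p ∈ pairsF n ↔ 1 ≤ p.1 ∧ p.1 < p.2 ∧ p.2 ≤ n+1 := by
  simp only [pairsF, Finset.mem_filter, Finset.mem_product, Finset.mem_Icc]
  omega

def invF (n : ℕ) (u : Equiv.Perm ℕ) : Finset (ℕ × ℕ) :=
  (pairsF n).filter fun p => u⁻¹ p.2 < u⁻¹ p.1

lemma mem_invF {n : ℕ} {u : Equiv.Perm ℕ} {p : ℕ × ℕ} :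
    p ∈ invF n u ↔ p ∈ pairsF n ∧ u⁻¹ p.2 < u⁻¹ p.1 := Finset.mem_filter

lemma swap_lt_swap_iff {a c d : ℕ} :
    sA a d < sA a c ↔ ((c = a ∧ d = a+1) ∨ (d < c ∧ ¬(d = a ∧ c = a+1))) := by
  simp only [sA, Equiv.swap_apply_def]
  split_ifs <;> omega

lemma mul_sA_inv_apply (u : Equiv.Perm ℕ) (a x : ℕ) :
    (u * sA a)⁻¹ x = sA a (u⁻¹ x) := by
  rw [mul_inv_rev]
  simp [sA, Equiv.swap_inv]

lemma invF_step_asc {n : ℕ} {u : Equiv.Perm ℕ} {a : ℕ}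
    (hua : 1 ≤ u a ∧ u a ≤ n+1) (hua1 : 1 ≤ u (a+1) ∧ u (a+1) ≤ n+1)
    (h : u a < u (a+1)) :
    invF n (u * sA a) = insert (u a, u (a+1)) (invF n u) := by
  ext p
  simp only [mem_invF, Finset.mem_insert, mul_sA_inv_apply, swap_lt_swap_iff]
  constructor
  · rintro ⟨hp, hc⟩
    rcases hc with ⟨h1, h2⟩ | ⟨h1, _⟩
    · left
      have e1 : p.1 = u a := by rw [← h1]; simp
      have e2 : p.2 = u (a+1) := by rw [← h2]; simp
      exact Prod.ext e1 e2
    · right; exact ⟨hp, h1⟩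
  · rintro (rfl | ⟨hp, hc⟩)
    · refine ⟨mem_pairsF.2 (by simp; omega), ?_⟩
      left; simp
    · refine ⟨hp, ?_⟩
      right
      refine ⟨hc, ?_⟩
      rintro ⟨h1, h2⟩
      have e1 : p.2 = u a := by rw [← h1]; simp
      have e2 : p.1 = u (a+1) := by rw [← h2]; simp
      have := (mem_pairsF.1 hp).2.1
      omega

lemma invF_step_desc {n : ℕ} {u : Equiv.Perm ℕ} {a : ℕ}
    (h : u (a+1) < u a) :
    invF n (u * sA a) = (invF n u).erase (u (a+1), u a) := by
  ext p
  simp only [mem_invF, Finset.mem_erase, mul_sA_inv_apply, swap_lt_swap_iff]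
  constructor
  · rintro ⟨hp, hc⟩
    rcases hc with ⟨h1, h2⟩ | ⟨h1, h2⟩
    · exfalso
      have e1 : p.1 = u a := by rw [← h1]; simp
      have e2 : p.2 = u (a+1) := by rw [← h2]; simp
      have := (mem_pairsF.1 hp).2.1
      omega
    · refine ⟨?_, hp, h1⟩
      intro hpe
      rw [hpe] at h2
      simp at h2
  · rintro ⟨hpe, hp, hc⟩
    refine ⟨hp, Or.inr ⟨hc, ?_⟩⟩
    rintro ⟨h1, h2⟩
    have e1 : p.2 = u a := by rw [← h1]; simp
    have e2 : p.1 = u (a+1) := by rw [← h2]; simp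
    exact hpe (Prod.ext e2 e1)

lemma pair_notmem_asc {n : ℕ} {u : Equiv.Perm ℕ} {a : ℕ} :
    (u a, u (a+1)) ∉ invF n u := by
  intro h
  have := (mem_invF.1 h).2
  simp at this

lemma pair_mem_desc {n : ℕ} {u : Equiv.Perm ℕ} {a : ℕ}
    (hua : 1 ≤ u a ∧ u a ≤ n+1) (hua1 : 1 ≤ u (a+1) ∧ u (a+1) ≤ n+1)
    (h : u (a+1) < u a) :
    (u (a+1), u a) ∈ invF n u := by
  simp only [mem_invF, mem_pairsF]
  constructor
  · omega
  · simp

lemma invF_one (n : ℕ) : invF n 1 = ∅ := by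
  ext p
  simp only [mem_invF, mem_pairsF, Finset.notMem_empty, iff_false]
  rintro ⟨h1, h2⟩
  simp at h2
  omega

lemma w0A_apply {n x : ℕ} (h1 : 1 ≤ x) (h2 : x ≤ n+1) : w0A n x = n+2-x := by
  simp [w0A, Function.Involutive.toPerm, Equiv.coe_fn_mk, h1, h2]

lemma w0A_inv (n : ℕ) : (w0A n)⁻¹ = w0A n := by
  ext x
  rw [Equiv.Perm.inv_eq_iff_eq]
  simp only [w0A, Function.Involutive.toPerm, Equiv.coe_fn_mk]
  split_ifs <;> omega

lemma invF_w0A (n : ℕ) : invF n (w0A n) = pairsF n := by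
  ext p
  simp only [mem_invF, w0A_inv]
  refine ⟨fun h => h.1, fun h => ⟨h, ?_⟩⟩
  have hp := mem_pairsF.1 h
  rw [w0A_apply (by omega) (by omega), w0A_apply (by omega) (by omega)]
  omega

lemma card_pairsF (n : ℕ) : (pairsF n).card = n * (n+1) / 2 := by
  induction n with
  | zero =>
    have : pairsF 0 = ∅ := by
      ext p; simp only [mem_pairsF, Finset.notMem_empty, iff_false]; omega
    simp [this]
  | succ n ih =>
    have hsplit : pairsF (n+1) =
        pairsF n ∪ (Finset.Icc 1 (n+1)).image (fun v => (v, n+2)) := by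
      ext p
      simp only [mem_pairsF, Finset.mem_union, Finset.mem_image, Finset.mem_Icc]
      constructor
      · rintro ⟨h1, h2, h3⟩
        by_cases hc : p.2 ≤ n+1
        · left; omega
        · right; exact ⟨p.1, by omega, Prod.ext rfl (by omega)⟩
      · rintro (⟨h1, h2, h3⟩ | ⟨v, hv, rfl⟩)
        · omega
        · simp; omega
    have hdisj : Disjoint (pairsF n) ((Finset.Icc 1 (n+1)).image (fun v => (v, n+2))) := by
      rw [Finset.disjoint_left]
      rintro p hp hq
      simp only [Finset.mem_image, Finset.mem_Icc] at hq
      obtain ⟨v, hv, rfl⟩ := hq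
      have := mem_pairsF.1 hp
      omega
    have hcard2 : ((Finset.Icc 1 (n+1)).image (fun v => (v, n+2))).card = n+1 := by
      rw [Finset.card_image_of_injective _ (fun x y h => by simpa using (Prod.ext_iff.1 h).1)]
      simp
    rw [hsplit, Finset.card_union_of_disjoint hdisj, ih, hcard2]
    have h2 : (n+1) * (n+2) = n*(n+1) + 2*(n+1) := by ring
    rw [h2, Nat.add_mul_div_left _ _ (by norm_num : 0 < 2)]

end St9
namespace St9

lemma getD_mem {w : List ℕ} {k : ℕ} (h : k < w.length) : w.getD k 0 ∈ w := by
  rw [List.getD_eq_getElem?_getD, List.getElem?_eq_getElem h]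
  exact List.getElem_mem h

lemma letter_bounds {n : ℕ} {w : List ℕ} (hl : lettersLE n w) {k : ℕ} (h : k < w.length) :
    1 ≤ w.getD k 0 ∧ w.getD k 0 ≤ n := hl _ (getD_mem h)

lemma lettersLE_take {n : ℕ} {w : List ℕ} (hl : lettersLE n w) (k : ℕ) :
    lettersLE n (w.take k) := fun a ha => hl a (List.mem_of_mem_take ha)

lemma uW_range {n : ℕ} {w : List ℕ} (hl : lettersLE n w) (k x : ℕ) :
    1 ≤ uW w k x ∧ uW w k x ≤ n+1 ↔ 1 ≤ x ∧ x ≤ n+1 :=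
  wordProdA_range (lettersLE_take hl k) x

lemma invF_uW_succ_cases {n : ℕ} {w : List ℕ} (hl : lettersLE n w) {k : ℕ}
    (hk : k < w.length) :
    (uW w k (w.getD k 0) < uW w k (w.getD k 0 + 1) ∧
      invF n (uW w (k+1)) = insert (pA w k) (invF n (uW w k)))
    ∨ (uW w k (w.getD k 0 + 1) < uW w k (w.getD k 0) ∧
      invF n (uW w (k+1)) =
        (invF n (uW w k)).erase (uW w k (w.getD k 0 + 1), uW w k (w.getD k 0))) := by
  have ha := letter_bounds hl hk
  set a := w.getD k 0 with hadef
  have hne : uW w k a ≠ uW w k (a+1) := (Equiv.injective _).ne (by omega)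
  have hr1 : 1 ≤ uW w k a ∧ uW w k a ≤ n+1 := (uW_range hl k a).2 (by omega)
  have hr2 : 1 ≤ uW w k (a+1) ∧ uW w k (a+1) ≤ n+1 := (uW_range hl k (a+1)).2 (by omega)
  rcases lt_or_gt_of_ne hne with h | h
  · left
    refine ⟨h, ?_⟩
    rw [uW_succ hk, ← hadef]
    exact invF_step_asc hr1 hr2 h
  · right
    refine ⟨h, ?_⟩
    rw [uW_succ hk, ← hadef]
    exact invF_step_desc h

lemma card_invF_le {n : ℕ} {w : List ℕ} (hl : lettersLE n w) :
    ∀ k, k ≤ w.length → (invF n (uW w k)).card ≤ k := by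
  intro k
  induction k with
  | zero => intro _; rw [uW_zero, invF_one]; simp
  | succ k ih =>
    intro hk
    have hk' : k < w.length := by omega
    have ihk := ih (by omega)
    rcases invF_uW_succ_cases hl hk' with ⟨_, he⟩ | ⟨_, he⟩
    · rw [he]
      have := Finset.card_insert_le (pA w k) (invF n (uW w k))
      omega
    · rw [he]
      have := Finset.card_le_card (Finset.erase_subset
        (uW w k (w.getD k 0 + 1), uW w k (w.getD k 0)) (invF n (uW w k)))
      omega

lemma uW_length {n : ℕ} {w : List ℕ} (hw : isReducedWordA n w) :
    uW w w.length = w0A n := by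
  rw [uW, List.take_length]
  exact hw.2.2

lemma card_invF_final {n : ℕ} {w : List ℕ} (hw : isReducedWordA n w) :
    (invF n (uW w w.length)).card = w.length := by
  rw [uW_length hw, invF_w0A, card_pairsF, hw.2.1]

lemma ascent {n : ℕ} {w : List ℕ} (hw : isReducedWordA n w) {k : ℕ} (hk : k < w.length) :
    uW w k (w.getD k 0) < uW w k (w.getD k 0 + 1) := by
  have hl := hw.1
  by_contra hcon
  rcases invF_uW_succ_cases (n := n) hl hk with ⟨h, _⟩ | ⟨h, he⟩
  · exact hcon h
  have hmem : (uW w k (w.getD k 0 + 1), uW w k (w.getD k 0)) ∈ invF n (uW w k) := by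
    have ha := letter_bounds hl hk
    exact pair_mem_desc ((uW_range hl k _).2 (by omega)) ((uW_range hl k _).2 (by omega)) h
  have hcard : (invF n (uW w (k+1))).card = (invF n (uW w k)).card - 1 := by
    rw [he]; exact Finset.card_erase_of_mem hmem
  have hpos : 1 ≤ (invF n (uW w k)).card := Finset.card_pos.2 ⟨_, hmem⟩
  have hle : (invF n (uW w k)).card ≤ k := card_invF_le hl k (by omega)
  -- now show card (invF (uW m)) + 2 ≤ m for all k+1 ≤ m ≤ len
  have key : ∀ m, k+1 ≤ m → m ≤ w.length → (invF n (uW w m)).card + 2 ≤ m := by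
    intro m
    induction m with
    | zero => omega
    | succ m ih =>
      intro h1 h2
      rcases Nat.lt_or_ge k m with hkm | hkm
      · have ihm := ih (by omega) (by omega)
        rcases invF_uW_succ_cases (n := n) hl (show m < w.length by omega) with ⟨_, he'⟩ | ⟨_, he'⟩
        · rw [he']
          have := Finset.card_insert_le (pA w m) (invF n (uW w m))
          omega
        · rw [he']
          have := Finset.card_le_card (Finset.erase_subset
            (uW w m (w.getD m 0 + 1), uW w m (w.getD m 0)) (invF n (uW w m)))
          omega
      · have : m = k := by omega
        subst this
        omega
  have := key w.length (by omega) le_rfl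
  have := card_invF_final hw
  omega

lemma invF_eq_image {n : ℕ} {w : List ℕ} (hw : isReducedWordA n w) :
    ∀ k, k ≤ w.length → invF n (uW w k) = (Finset.range k).image (pA w) := by
  intro k
  induction k with
  | zero => intro _; rw [uW_zero, invF_one]; simp
  | succ k ih =>
    intro hk
    have hk' : k < w.length := by omega
    rcases invF_uW_succ_cases (n := n) hw.1 hk' with ⟨_, he⟩ | ⟨h, _⟩
    · rw [he, ih (by omega), Finset.range_add_one, Finset.image_insert]
    · exact absurd (ascent hw hk') (by omega)

lemma pA_mem_pairsF {n : ℕ} {w : List ℕ} (hw : isReducedWordA n w) {k : ℕ}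
    (hk : k < w.length) : pA w k ∈ pairsF n := by
  have : pA w k ∈ invF n (uW w (k+1)) := by
    rw [invF_eq_image hw (k+1) (by omega)]
    exact Finset.mem_image.2 ⟨k, by simp, rfl⟩
  exact (mem_invF.1 this).1

lemma pA_lt {n : ℕ} {w : List ℕ} (hw : isReducedWordA n w) {k : ℕ}
    (hk : k < w.length) : (pA w k).1 < (pA w k).2 :=
  (mem_pairsF.1 (pA_mem_pairsF hw hk)).2.1

lemma mem_invF_iff_lt {n : ℕ} {w : List ℕ} (hw : isReducedWordA n w) {t k : ℕ}
    (ht : t ≤ w.length) (hk : k < w.length) :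
    pA w k ∈ invF n (uW w t) ↔ k < t := by
  rw [invF_eq_image hw t ht, Finset.mem_image]
  constructor
  · rintro ⟨j, hj, hjk⟩
    simp only [Finset.mem_range] at hj
    by_contra hc
    -- j < t ≤ k, pA w j = pA w k, contradiction with not mem at time k? use notmem
    have hjk' : j < k := by omega
    have : pA w k ∈ invF n (uW w k) := by
      rw [invF_eq_image hw k (le_of_lt hk), Finset.mem_image]
      exact ⟨j, Finset.mem_range.2 hjk', hjk⟩
    exact pair_notmem_asc this
  · intro h
    exact ⟨k, Finset.mem_range.2 h, rfl⟩

lemma pA_inj {n : ℕ} {w : List ℕ} (hw : isReducedWordA n w) {j k : ℕ}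
    (hj : j < w.length) (hk : k < w.length) (h : pA w j = pA w k) : j = k := by
  by_contra hc
  rcases Nat.lt_or_ge j k with hlt | hge
  · have h1 : pA w j ∈ invF n (uW w k) := (mem_invF_iff_lt hw (le_of_lt hk) hj).2 hlt
    rw [h] at h1
    exact pair_notmem_asc h1
  · have hlt : k < j := by omega
    have h1 : pA w k ∈ invF n (uW w j) := (mem_invF_iff_lt hw (le_of_lt hj) hk).2 hlt
    rw [← h] at h1
    exact pair_notmem_asc h1

lemma pA_surj {n : ℕ} {w : List ℕ} (hw : isReducedWordA n w) {p : ℕ × ℕ}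
    (hp : p ∈ pairsF n) : ∃ k, k < w.length ∧ pA w k = p := by
  have : p ∈ invF n (uW w w.length) := by
    rw [uW_length hw, invF_w0A]; exact hp
  rw [invF_eq_image hw w.length le_rfl, Finset.mem_image] at this
  obtain ⟨k, hk, hkp⟩ := this
  exact ⟨k, Finset.mem_range.1 hk, hkp⟩

lemma invF_trans2 {n : ℕ} {u : Equiv.Perm ℕ} {x y z : ℕ}
    (hxy : (x,y) ∈ pairsF n) (hyz : (y,z) ∈ pairsF n)
    (h3 : (x,z) ∈ invF n u) (h1 : (x,y) ∉ invF n u) (h2 : (y,z) ∉ invF n u) : False := by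
  have c3 := (mem_invF.1 h3).2
  have c1 : ¬ u⁻¹ (x,y).2 < u⁻¹ (x,y).1 := fun hc => h1 (mem_invF.2 ⟨hxy, hc⟩)
  have c2 : ¬ u⁻¹ (y,z).2 < u⁻¹ (y,z).1 := fun hc => h2 (mem_invF.2 ⟨hyz, hc⟩)
  simp only at c1 c2 c3
  omega

lemma invF_trans {n : ℕ} {u : Equiv.Perm ℕ} {x y z : ℕ}
    (hxz : (x,z) ∈ pairsF n)
    (h1 : (x,y) ∈ invF n u) (h2 : (y,z) ∈ invF n u) : (x,z) ∈ invF n u := by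
  have c1 := (mem_invF.1 h1).2
  have c2 := (mem_invF.1 h2).2
  refine mem_invF.2 ⟨hxz, ?_⟩
  simp only at c1 c2 ⊢
  omega

/-- Betweenness: the crossing of `(x,z)` lies strictly between those of `(x,y)` and `(y,z)`. -/
lemma between {n : ℕ} {w : List ℕ} (hw : isReducedWordA n w) {x y z k1 k2 k3 : ℕ}
    (hk1 : k1 < w.length) (hk2 : k2 < w.length) (hk3 : k3 < w.length)
    (h1 : pA w k1 = (x,y)) (h2 : pA w k2 = (y,z)) (h3 : pA w k3 = (x,z)) :
    (k1 < k3 ∨ k2 < k3) ∧ (k3 < k1 ∨ k3 < k2) := by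
  have hxy : (x,y) ∈ pairsF n := h1 ▸ pA_mem_pairsF hw hk1
  have hyz : (y,z) ∈ pairsF n := h2 ▸ pA_mem_pairsF hw hk2
  have hxz : (x,z) ∈ pairsF n := h3 ▸ pA_mem_pairsF hw hk3
  have hxy' := mem_pairsF.1 hxy
  have hyz' := mem_pairsF.1 hyz
  have hne1 : k3 ≠ k1 := fun h => by
    rw [h, h1] at h3; have := (Prod.ext_iff.1 h3).2; omega
  have hne2 : k3 ≠ k2 := fun h => by
    rw [h, h2] at h3; have := (Prod.ext_iff.1 h3).1; omega
  constructor
  · by_contra hc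
    push_neg at hc
    have hlt1 : k3 < k1 := by omega
    have hlt2 : k3 < k2 := by omega
    have m3 : pA w k3 ∈ invF n (uW w (k3+1)) := (mem_invF_iff_lt hw (by omega) hk3).2 (by omega)
    have m1 : pA w k1 ∉ invF n (uW w (k3+1)) := fun hc' =>
      absurd ((mem_invF_iff_lt hw (by omega) hk1).1 hc') (by omega)
    have m2 : pA w k2 ∉ invF n (uW w (k3+1)) := fun hc' =>
      absurd ((mem_invF_iff_lt hw (by omega) hk2).1 hc') (by omega)
    rw [h3] at m3; rw [h1] at m1; rw [h2] at m2
    exact invF_trans2 hxy hyz m3 m1 m2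
  · by_contra hc
    push_neg at hc
    have hlt1 : k1 < k3 := by omega
    have hlt2 : k2 < k3 := by omega
    have m1 : pA w k1 ∈ invF n (uW w k3) := (mem_invF_iff_lt hw (by omega) hk1).2 hlt1
    have m2 : pA w k2 ∈ invF n (uW w k3) := (mem_invF_iff_lt hw (by omega) hk2).2 hlt2
    rw [h1] at m1; rw [h2] at m2
    have m3 : (x,z) ∈ invF n (uW w k3) := invF_trans hxz m1 m2
    rw [← h3] at m3
    have := (mem_invF_iff_lt hw (by omega) hk3).1 m3
    omega

lemma seq_inj {n : ℕ} {w : List ℕ} (hw : isReducedWordA n w) {j k : ℕ}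
    (hj : j < w.length) (hk : k < w.length)
    (h : (rootSeqA w).getD j 0 = (rootSeqA w).getD k 0) : j = k := by
  rw [rootSeqA_getD hj, rootSeqA_getD hk] at h
  exact pA_inj hw hj hk
    (vr_inj (Nat.ne_of_lt (pA_lt hw hj)) (Nat.ne_of_lt (pA_lt hw hk)) h)

end St9
namespace St9

lemma sA_left (a : ℕ) : sA a a = a + 1 := Equiv.swap_apply_left a (a+1)
lemma sA_right (a : ℕ) : sA a (a+1) = a := Equiv.swap_apply_right a (a+1)

lemma self_eq_two {w : List ℕ} {k : ℕ} (h : k+1 < w.length) :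
    w = w.take k ++ w.getD k 0 :: w.getD (k+1) 0 :: w.drop (k+2) := by
  have h1 : w.drop k = w.getD k 0 :: w.drop (k+1) := by
    rw [List.getD_eq_getElem?_getD, List.getElem?_eq_getElem (by omega)]
    exact List.drop_eq_getElem_cons (by omega)
  have h2 : w.drop (k+1) = w.getD (k+1) 0 :: w.drop (k+2) := by
    rw [List.getD_eq_getElem?_getD, List.getElem?_eq_getElem (by omega)]
    exact List.drop_eq_getElem_cons (by omega)
  conv_lhs => rw [← List.take_append_drop k w, h1, h2]

lemma self_eq_three {w : List ℕ} {k : ℕ} (h : k+2 < w.length) :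
    w = w.take k ++ w.getD k 0 :: w.getD (k+1) 0 :: w.getD (k+2) 0 :: w.drop (k+3) := by
  have h3 : w.drop (k+2) = w.getD (k+2) 0 :: w.drop (k+3) := by
    rw [List.getD_eq_getElem?_getD, List.getElem?_eq_getElem (by omega)]
    exact List.drop_eq_getElem_cons (by omega)
  conv_lhs => rw [self_eq_two (show k+1 < w.length by omega), h3]

lemma set_set_two : ∀ (w : List ℕ) (k : ℕ), k + 1 < w.length → ∀ x y,
    (w.set k x).set (k+1) y = w.take k ++ x :: y :: w.drop (k+2) := by
  intro w
  induction w with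
  | nil => intro k h; simp at h
  | cons c w ih =>
    intro k h x y
    cases k with
    | zero =>
      cases w with
      | nil => simp at h
      | cons d w => simp
    | succ k =>
      have := ih k (by simp only [List.length_cons] at h; omega) x y
      simp only [List.set_cons_succ, List.take_succ_cons, List.drop_succ_cons]
      rw [this]
      simp

lemma set_set_three : ∀ (w : List ℕ) (k : ℕ), k + 2 < w.length → ∀ x y z,
    ((w.set k x).set (k+1) y).set (k+2) z = w.take k ++ x :: y :: z :: w.drop (k+3) := by
  intro w
  induction w with
  | nil => intro k h; simp at h
  | cons c w ih =>
    intro k h x y z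
    cases k with
    | zero =>
      cases w with
      | nil => simp at h
      | cons d w =>
        cases w with
        | nil => simp at h
        | cons e w => simp
    | succ k =>
      have := ih k (by simp only [List.length_cons] at h; omega) x y z
      simp only [List.set_cons_succ, List.take_succ_cons, List.drop_succ_cons]
      rw [this]
      simp

lemma moveWord_two_eq {w : List ℕ} {k : ℕ} (h : k+1 < w.length) :
    moveWord w (.two k) = w.take k ++ w.getD (k+1) 0 :: w.getD k 0 :: w.drop (k+2) :=
  set_set_two w k h _ _

lemma moveWord_three_eq {w : List ℕ} {k : ℕ} (h : k+2 < w.length) :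
    moveWord w (.three k) =
      w.take k ++ w.getD (k+1) 0 :: w.getD k 0 :: w.getD (k+1) 0 :: w.drop (k+3) :=
  set_set_three w k h _ _ _

lemma moveWord_length (w : List ℕ) (m : BraidMove) : (moveWord w m).length = w.length := by
  cases m <;> simp [moveWord]

lemma uW_of_append (A B : List ℕ) (j : ℕ) (hj : A.length ≤ j) :
    uW (A ++ B) j = wordProdA A * uW B (j - A.length) := by
  rw [uW, List.take_append, List.take_of_length_le hj, wordProdA_append]
  rfl

lemma uW_of_append_le (A B : List ℕ) (j : ℕ) (hj : j ≤ A.length) :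
    uW (A ++ B) j = uW A j := by
  rw [uW, List.take_append, Nat.sub_eq_zero_of_le hj]
  simp [uW]

lemma getD_of_append_ge (A B : List ℕ) (j : ℕ) (hj : A.length ≤ j) :
    (A ++ B).getD j 0 = B.getD (j - A.length) 0 := by
  rw [List.getD_eq_getElem?_getD, List.getD_eq_getElem?_getD, List.getElem?_append_right hj]

lemma getD_of_append_lt (A B : List ℕ) (j : ℕ) (hj : j < A.length) :
    (A ++ B).getD j 0 = A.getD j 0 := by
  rw [List.getD_eq_getElem?_getD, List.getD_eq_getElem?_getD, List.getElem?_append_left hj]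

lemma pA_append (A B : List ℕ) (j : ℕ) (hj : A.length ≤ j) :
    pA (A ++ B) j = (wordProdA A (pA B (j - A.length)).1,
      wordProdA A (pA B (j - A.length)).2) := by
  simp only [pA, uW_of_append A B j hj, getD_of_append_ge A B j hj, Equiv.Perm.mul_apply]

lemma pA_prefix (A B : List ℕ) (j : ℕ) (hj : j < A.length) :
    pA (A ++ B) j = pA A j := by
  simp only [pA, uW_of_append_le A B j (le_of_lt hj), getD_of_append_lt A B j hj]

lemma pA_cons_zero (x : ℕ) (B : List ℕ) : pA (x :: B) 0 = (x, x+1) := by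
  simp [pA, uW_zero]

lemma uW_cons_one (x : ℕ) (B : List ℕ) : uW (x :: B) 1 = sA x := by
  simp [uW, wordProdA]

lemma uW_cons_two (x y : ℕ) (B : List ℕ) : uW (x :: y :: B) 2 = sA x * sA y := by
  simp [uW, wordProdA, List.take]

/-- all the pair-sequence facts for a valid 2-move -/
lemma pA_moveWord_two {w : List ℕ} {k : ℕ} (h : k+1 < w.length)
    (hd : w.getD k 0 + 2 ≤ w.getD (k+1) 0 ∨ w.getD (k+1) 0 + 2 ≤ w.getD k 0) :
    (∀ j, j ≠ k → j ≠ k+1 → pA (moveWord w (.two k)) j = pA w j)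
    ∧ pA (moveWord w (.two k)) k = pA w (k+1)
    ∧ pA (moveWord w (.two k)) (k+1) = pA w k := by
  set a := w.getD k 0 with hadef
  set b := w.getD (k+1) 0 with hbdef
  set D := w.drop (k+2) with hDdef
  have hA : (w.take k).length = k := by rw [List.length_take]; omega
  have hw' : moveWord w (.two k) = w.take k ++ b :: a :: D := moveWord_two_eq h
  have hw2 : w = w.take k ++ a :: b :: D := self_eq_two h
  have hprod : wordProdA [b, a] = wordProdA [a, b] := by
    simp only [wordProdA, List.map_cons, List.map_nil, List.prod_cons, List.prod_nil,
      mul_one]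
    exact (sA_comm hd).symm
  refine ⟨?_, ?_, ?_⟩
  · intro j hj1 hj2
    rcases Nat.lt_or_ge j k with hjk | hjk
    · rw [hw', pA_prefix _ _ _ (by omega)]
      conv_rhs => rw [hw2]
      rw [pA_prefix _ _ _ (by omega)]
    · have hjk2 : k + 2 ≤ j := by omega
      rw [hw', pA_append _ _ _ (by omega)]
      conv_rhs => rw [hw2]
      rw [pA_append _ _ _ (by omega), hA]
      have e1 : b :: a :: D = [b, a] ++ D := rfl
      have e2 : a :: b :: D = [a, b] ++ D := rfl
      rw [e1, e2, pA_append _ _ _ (by simp; omega), pA_append _ _ _ (by simp; omega),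
        hprod]
      simp
  · rw [hw', pA_append _ _ _ (by omega), hA, Nat.sub_self, pA_cons_zero]
    have h2 := pA_append (w.take k) (a :: b :: D) (k+1) (by omega)
    rw [← hw2] at h2
    rw [h2, hA]
    have e3 : k + 1 - k = 1 := by omega
    rw [e3]
    have : pA (a :: b :: D) 1 = (b, b+1) := by
      simp only [pA, uW_cons_one]
      have g1 : (a :: b :: D).getD 1 0 = b := rfl
      rw [g1, sA_apply_of_ne (by omega) (by omega), sA_apply_of_ne (by omega) (by omega)]
    rw [this]
  · rw [hw', pA_append _ _ _ (by omega), hA]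
    have e3 : k + 1 - k = 1 := by omega
    rw [e3]
    have h2 := pA_append (w.take k) (a :: b :: D) k (by omega)
    rw [← hw2] at h2
    rw [h2, hA, Nat.sub_self, pA_cons_zero]
    have : pA (b :: a :: D) 1 = (a, a+1) := by
      simp only [pA, uW_cons_one]
      have g1 : (b :: a :: D).getD 1 0 = a := rfl
      rw [g1, sA_apply_of_ne (by omega) (by omega), sA_apply_of_ne (by omega) (by omega)]
    rw [this]

/-- all the pair-sequence facts for a valid 3-move -/
lemma pA_moveWord_three {w : List ℕ} {k : ℕ} (h : k+2 < w.length)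
    (heq : w.getD (k+2) 0 = w.getD k 0)
    (hd : w.getD k 0 + 1 = w.getD (k+1) 0 ∨ w.getD (k+1) 0 + 1 = w.getD k 0) :
    (∀ j, j ≠ k → j ≠ k+1 → j ≠ k+2 → pA (moveWord w (.three k)) j = pA w j)
    ∧ pA (moveWord w (.three k)) k = pA w (k+2)
    ∧ pA (moveWord w (.three k)) (k+1) = pA w (k+1)
    ∧ pA (moveWord w (.three k)) (k+2) = pA w k := by
  set a := w.getD k 0 with hadef
  set b := w.getD (k+1) 0 with hbdef
  set D := w.drop (k+3) with hDdef
  have hA : (w.take k).length = k := by rw [List.length_take]; omega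
  have hw' : moveWord w (.three k) = w.take k ++ b :: a :: b :: D := moveWord_three_eq h
  have hw2 : w = w.take k ++ a :: b :: a :: D := by
    have := self_eq_three h
    rw [heq] at this
    exact this
  have hprod : wordProdA [b, a, b] = wordProdA [a, b, a] := by
    simp only [wordProdA, List.map_cons, List.map_nil, List.prod_cons, List.prod_nil,
      mul_one, ← mul_assoc]
    exact (sA_braid hd).symm
  refine ⟨?_, ?_, ?_, ?_⟩
  · intro j hj1 hj2 hj3
    rcases Nat.lt_or_ge j k with hjk | hjk
    · rw [hw', pA_prefix _ _ _ (by omega)]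
      conv_rhs => rw [hw2]
      rw [pA_prefix _ _ _ (by omega)]
    · have hjk2 : k + 3 ≤ j := by omega
      rw [hw', pA_append _ _ _ (by omega)]
      conv_rhs => rw [hw2]
      rw [pA_append _ _ _ (by omega), hA]
      have e1 : b :: a :: b :: D = [b, a, b] ++ D := rfl
      have e2 : a :: b :: a :: D = [a, b, a] ++ D := rfl
      rw [e1, e2, pA_append _ _ _ (by simp; omega), pA_append _ _ _ (by simp; omega),
        hprod]
      simp
  · rw [hw', pA_append _ _ _ (by omega), hA, Nat.sub_self, pA_cons_zero]
    have h2 := pA_append (w.take k) (a :: b :: a :: D) (k+2) (by omega)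
    rw [← hw2] at h2
    rw [h2, hA]
    have e3 : k + 2 - k = 2 := by omega
    rw [e3]
    have : pA (a :: b :: a :: D) 2 = (b, b+1) := by
      simp only [pA, uW_cons_two]
      have g1 : (a :: b :: a :: D).getD 2 0 = a := rfl
      rw [g1]
      simp only [Equiv.Perm.mul_apply]
      rcases hd with hd | hd
      · rw [show sA b a = a from sA_apply_of_ne (by omega) (by omega),
          show sA a a = a+1 from sA_left a,
          show sA b (a+1) = b+1 from by rw [← hd]; exact sA_left _,
          show sA a (b+1) = b+1 from sA_apply_of_ne (by omega) (by omega)]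
        exact Prod.ext (by omega) rfl
      · rw [show sA b a = b from by rw [← hd]; exact sA_right b,
          show sA a b = b from sA_apply_of_ne (by omega) (by omega),
          show sA b (a+1) = a+1 from sA_apply_of_ne (by omega) (by omega),
          show sA a (a+1) = a from sA_right a]
        exact Prod.ext rfl (by omega)
    rw [this]
  · rw [hw', pA_append _ _ _ (by omega), hA]
    have e3 : k + 1 - k = 1 := by omega
    rw [e3]
    have h2 := pA_append (w.take k) (a :: b :: a :: D) (k+1) (by omega)
    rw [← hw2] at h2
    rw [h2, hA, e3]
    have lhs1 : pA (b :: a :: b :: D) 1 = (sA b a, sA b (a+1)) := by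
      simp only [pA, uW_cons_one]; rfl
    have rhs1 : pA (a :: b :: a :: D) 1 = (sA a b, sA a (b+1)) := by
      simp only [pA, uW_cons_one]; rfl
    rw [lhs1, rhs1]
    rcases hd with hd | hd
    · rw [show sA b a = a from sA_apply_of_ne (by omega) (by omega),
        show sA b (a+1) = b+1 from by rw [← hd]; exact sA_left _,
        show sA a b = a from by rw [← hd]; exact sA_right a,
        show sA a (b+1) = b+1 from sA_apply_of_ne (by omega) (by omega)]
    · rw [show sA b a = b from by rw [← hd]; exact sA_right b,
        show sA b (a+1) = a+1 from sA_apply_of_ne (by omega) (by omega),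
        show sA a b = b from sA_apply_of_ne (by omega) (by omega),
        show sA a (b+1) = a+1 from by rw [hd]; exact sA_left a]
  · rw [hw', pA_append _ _ _ (by omega), hA]
    have e3 : k + 2 - k = 2 := by omega
    rw [e3]
    have h2 := pA_append (w.take k) (a :: b :: a :: D) k (by omega)
    rw [← hw2] at h2
    rw [h2, hA, Nat.sub_self, pA_cons_zero]
    have : pA (b :: a :: b :: D) 2 = (a, a+1) := by
      simp only [pA, uW_cons_two]
      have g1 : (b :: a :: b :: D).getD 2 0 = b := rfl
      rw [g1]
      simp only [Equiv.Perm.mul_apply]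
      rcases hd with hd | hd
      · rw [show sA a b = a from by rw [← hd]; exact sA_right a,
          show sA b a = a from sA_apply_of_ne (by omega) (by omega),
          show sA a (b+1) = b+1 from sA_apply_of_ne (by omega) (by omega),
          show sA b (b+1) = b from sA_right b]
        exact Prod.ext rfl (by omega)
      · rw [show sA a b = b from sA_apply_of_ne (by omega) (by omega),
          show sA b b = b+1 from sA_left b,
          show sA a (b+1) = a+1 from by rw [hd]; exact sA_left a,
          show sA b (a+1) = a+1 from sA_apply_of_ne (by omega) (by omega)]
        exact Prod.ext (by omega) rfl
    rw [this]

end St9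
namespace St9

lemma wordProdA_moveWord {w : List ℕ} {m : BraidMove} (hok : moveOKA w m) :
    wordProdA (moveWord w m) = wordProdA w := by
  cases m with
  | two k =>
    obtain ⟨h, hd⟩ := hok
    rw [moveWord_two_eq h]
    conv_rhs => rw [self_eq_two h]
    simp only [wordProdA_append, wordProdA_cons]
    congr 1
    rw [← mul_assoc, ← mul_assoc, sA_comm (Or.symm hd)]
  | three k =>
    obtain ⟨h, heq, hd⟩ := hok
    rw [moveWord_three_eq h]
    conv_rhs => rw [self_eq_three h, heq]
    simp only [wordProdA_append, wordProdA_cons]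
    congr 1
    rw [← mul_assoc, ← mul_assoc, ← mul_assoc, ← mul_assoc, sA_braid hd]

lemma lettersLE_moveWord {n : ℕ} {w : List ℕ} {m : BraidMove} (hl : lettersLE n w)
    (hok : moveOKA w m) : lettersLE n (moveWord w m) := by
  cases m with
  | two k =>
    obtain ⟨h, _⟩ := hok
    rw [moveWord_two_eq h]
    intro x hx
    rcases List.mem_append.1 hx with hx | hx
    · exact hl x (List.mem_of_mem_take hx)
    · rcases hx with _ | ⟨_, hx⟩
      · exact hl _ (getD_mem (by omega))
      · rcases hx with _ | ⟨_, hx⟩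
        · exact hl _ (getD_mem (by omega))
        · exact hl x (List.mem_of_mem_drop hx)
  | three k =>
    obtain ⟨h, _, _⟩ := hok
    rw [moveWord_three_eq h]
    intro x hx
    rcases List.mem_append.1 hx with hx | hx
    · exact hl x (List.mem_of_mem_take hx)
    · rcases hx with _ | ⟨_, hx⟩
      · exact hl _ (getD_mem (by omega))
      · rcases hx with _ | ⟨_, hx⟩
        · exact hl _ (getD_mem (by omega))
        · rcases hx with _ | ⟨_, hx⟩
          · exact hl _ (getD_mem (by omega))
          · exact hl x (List.mem_of_mem_drop hx)

lemma reduced_moveWord {n : ℕ} {w : List ℕ} {m : BraidMove} (hw : isReducedWordA n w)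
    (hok : moveOKA w m) : isReducedWordA n (moveWord w m) :=
  ⟨lettersLE_moveWord hw.1 hok,
   by rw [moveWord_length]; exact hw.2.1,
   by rw [wordProdA_moveWord hok]; exact hw.2.2⟩

lemma seq_moveWord_two {w : List ℕ} {k : ℕ} (h : k+1 < w.length)
    (hd : w.getD k 0 + 2 ≤ w.getD (k+1) 0 ∨ w.getD (k+1) 0 + 2 ≤ w.getD k 0) :
    (∀ j, j < w.length → j ≠ k → j ≠ k+1 →
      (rootSeqA (moveWord w (.two k))).getD j 0 = (rootSeqA w).getD j 0)
    ∧ (rootSeqA (moveWord w (.two k))).getD k 0 = (rootSeqA w).getD (k+1) 0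
    ∧ (rootSeqA (moveWord w (.two k))).getD (k+1) 0 = (rootSeqA w).getD k 0 := by
  have hlen := moveWord_length w (.two k)
  obtain ⟨h0, h1, h2⟩ := pA_moveWord_two h hd
  refine ⟨fun j hj hj1 hj2 => ?_, ?_, ?_⟩
  · rw [rootSeqA_getD (by omega : j < (moveWord w (.two k)).length),
      rootSeqA_getD hj, h0 j hj1 hj2]
  · rw [rootSeqA_getD (by omega : k < (moveWord w (.two k)).length),
      rootSeqA_getD (by omega), h1]
  · rw [rootSeqA_getD (by omega : k+1 < (moveWord w (.two k)).length),
      rootSeqA_getD (by omega), h2]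

lemma seq_moveWord_three {w : List ℕ} {k : ℕ} (h : k+2 < w.length)
    (heq : w.getD (k+2) 0 = w.getD k 0)
    (hd : w.getD k 0 + 1 = w.getD (k+1) 0 ∨ w.getD (k+1) 0 + 1 = w.getD k 0) :
    (∀ j, j < w.length → j ≠ k → j ≠ k+1 → j ≠ k+2 →
      (rootSeqA (moveWord w (.three k))).getD j 0 = (rootSeqA w).getD j 0)
    ∧ (rootSeqA (moveWord w (.three k))).getD k 0 = (rootSeqA w).getD (k+2) 0
    ∧ (rootSeqA (moveWord w (.three k))).getD (k+1) 0 = (rootSeqA w).getD (k+1) 0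
    ∧ (rootSeqA (moveWord w (.three k))).getD (k+2) 0 = (rootSeqA w).getD k 0 := by
  have hlen := moveWord_length w (.three k)
  obtain ⟨h0, h1, h2, h3⟩ := pA_moveWord_three h heq hd
  refine ⟨fun j hj hj1 hj2 hj3 => ?_, ?_, ?_, ?_⟩
  · rw [rootSeqA_getD (by omega : j < (moveWord w (.three k)).length),
      rootSeqA_getD hj, h0 j hj1 hj2 hj3]
  · rw [rootSeqA_getD (by omega : k < (moveWord w (.three k)).length),
      rootSeqA_getD (by omega), h1]
  · rw [rootSeqA_getD (by omega : k+1 < (moveWord w (.three k)).length),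
      rootSeqA_getD (by omega), h2]
  · rw [rootSeqA_getD (by omega : k+2 < (moveWord w (.three k)).length),
      rootSeqA_getD (by omega), h3]

lemma ipA_alphaA {n i : ℕ} (hi2 : i ≤ n) (v : ℕ → ℤ) :
    ipA n (alphaA i) v = v i - v (i+1) := by
  rw [ipA]
  have h1 : ∀ j ∈ Finset.range (n+2), alphaA i j * v j
      = (if j = i then v j else 0) - (if j = i+1 then v j else 0) := by
    intro j _
    simp only [alphaA, stdE, Pi.sub_apply]
    split_ifs <;> ring
  rw [Finset.sum_congr rfl h1, Finset.sum_sub_distrib,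
    Finset.sum_ite_eq' (Finset.range (n+2)) i v,
    Finset.sum_ite_eq' (Finset.range (n+2)) (i+1) v]
  rw [if_pos (Finset.mem_range.2 (by omega)), if_pos (Finset.mem_range.2 (by omega))]

lemma eta_form {n i x y : ℕ} (hi2 : i ≤ n) (hlt : x < y)
    (hneg : ipA n (alphaA i) (vr (x, y)) < 0) : (y = i ∧ x < i) ∨ (x = i+1 ∧ i+1 < y) := by
  rw [ipA_alphaA hi2] at hneg
  simp only [vr_apply] at hneg
  split_ifs at hneg <;> omega

lemma ip_form1 {n i x : ℕ} (hi2 : i ≤ n) (hx : x < i) :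
    ipA n (alphaA i) (vr (x, i)) < 0 := by
  rw [ipA_alphaA hi2]
  simp only [vr_apply]
  split_ifs <;> omega

lemma ip_form2 {n i y : ℕ} (hi2 : i ≤ n) (hy : i+1 < y) :
    ipA n (alphaA i) (vr (i+1, y)) < 0 := by
  rw [ipA_alphaA hi2]
  simp only [vr_apply]
  split_ifs <;> omega

lemma ip_nu1 {n i x : ℕ} (hi2 : i ≤ n) (hx : x < i) :
    ¬ ipA n (alphaA i) (vr (x, i+1)) < 0 := by
  rw [ipA_alphaA hi2]
  simp only [vr_apply]
  split_ifs <;> omega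

lemma ip_nu2 {n i y : ℕ} (hi2 : i ≤ n) (hy : i+1 < y) :
    ¬ ipA n (alphaA i) (vr (i, y)) < 0 := by
  rw [ipA_alphaA hi2]
  simp only [vr_apply]
  split_ifs <;> omega

lemma takeWhile_eq_take' {α : Type*} (p : α → Bool) (d : α) :
    ∀ (l : List α) (T : ℕ), T ≤ l.length →
    (∀ j, j < T → p (l.getD j d) = true) →
    (T < l.length → p (l.getD T d) = false) → l.takeWhile p = l.take T := by
  intro l
  induction l with
  | nil =>
    intro T hT _ _
    simp at hT
    simp [hT]
  | cons a l ih =>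
    intro T hT hall hstop
    cases T with
    | zero =>
      have h0 := hstop (by simp)
      simp only [List.getD_cons_zero] at h0
      simp [List.takeWhile_cons, h0]
    | succ T =>
      have h0 : p a = true := by
        have := hall 0 (by omega)
        simpa using this
      have hrec := ih T (by simpa using hT)
        (fun j hj => by have := hall (j+1) (by omega); simpa using this)
        (fun hT' => by have := hstop (by simpa using hT'); simpa using this)
      simp [List.takeWhile_cons, h0, hrec]

lemma eq_of_getD {α : Type*} (d : α) (l l' : List α) (hlen : l'.length = l.length)
    (h : ∀ j, j < l.length → l'.getD j d = l.getD j d) : l' = l := by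
  apply List.ext_getElem hlen
  intro j h1 h2
  have := h j h2
  rwa [List.getD_eq_getElem?_getD, List.getD_eq_getElem?_getD,
    List.getElem?_eq_getElem h1, List.getElem?_eq_getElem h2] at this

lemma getD_of_append_geG {α : Type*} (d : α) (A B : List α) (j : ℕ) (hj : A.length ≤ j) :
    (A ++ B).getD j d = B.getD (j - A.length) d := by
  rw [List.getD_eq_getElem?_getD, List.getD_eq_getElem?_getD, List.getElem?_append_right hj]

lemma getD_of_append_ltG {α : Type*} (d : α) (A B : List α) (j : ℕ) (hj : j < A.length) :
    (A ++ B).getD j d = A.getD j d := by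
  rw [List.getD_eq_getElem?_getD, List.getD_eq_getElem?_getD, List.getElem?_append_left hj]

lemma self_eq_twoG {α : Type*} (d : α) {w : List α} {k : ℕ} (h : k+1 < w.length) :
    w = w.take k ++ w.getD k d :: w.getD (k+1) d :: w.drop (k+2) := by
  have h1 : w.drop k = w.getD k d :: w.drop (k+1) := by
    rw [List.getD_eq_getElem?_getD, List.getElem?_eq_getElem (by omega)]
    exact List.drop_eq_getElem_cons (by omega)
  have h2 : w.drop (k+1) = w.getD (k+1) d :: w.drop (k+2) := by
    rw [List.getD_eq_getElem?_getD, List.getElem?_eq_getElem (by omega)]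
    exact List.drop_eq_getElem_cons (by omega)
  conv_lhs => rw [← List.take_append_drop k w, h1, h2]

lemma self_eq_oneG {α : Type*} (d : α) {w : List α} {k : ℕ} (h : k < w.length) :
    w = w.take k ++ w.getD k d :: w.drop (k+1) := by
  have h1 : w.drop k = w.getD k d :: w.drop (k+1) := by
    rw [List.getD_eq_getElem?_getD, List.getElem?_eq_getElem (by omega)]
    exact List.drop_eq_getElem_cons (by omega)
  conv_lhs => rw [← List.take_append_drop k w, h1]

end St9
namespace St9

lemma pA_succ_of_dist {w : List ℕ} {c : ℕ} (h : c+1 < w.length)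
    (hd : w.getD c 0 + 2 ≤ w.getD (c+1) 0 ∨ w.getD (c+1) 0 + 2 ≤ w.getD c 0) :
    pA w (c+1) = (uW w c (w.getD (c+1) 0), uW w c (w.getD (c+1) 0 + 1)) := by
  rw [pA, uW_succ (show c < w.length by omega)]
  simp only [Equiv.Perm.mul_apply]
  rw [sA_apply_of_ne (by omega) (by omega), sA_apply_of_ne (by omega) (by omega)]

def tau2 (c j : ℕ) : ℕ := if j = c then c+1 else if j = c+1 then c else j

lemma tau2_lt {c j1 j2 : ℕ} (hlt : j1 < j2) (hnot : ¬(j1 = c ∧ j2 = c+1)) :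
    tau2 c j1 < tau2 c j2 := by
  unfold tau2
  split_ifs <;> omega

lemma tau2_bound {c j L : ℕ} (hj : j < L) (hc : c + 1 < L) : tau2 c j < L := by
  unfold tau2
  split_ifs <;> omega

lemma tau2_eq_of_ne {c j : ℕ} (h1 : j ≠ c) (h2 : j ≠ c+1) : tau2 c j = j := by
  unfold tau2
  split_ifs <;> omega

lemma alphaA_apply_self (i : ℕ) : alphaA i i = 1 := by
  show (if i = i then (1:ℤ) else 0) - (if i = i+1 then 1 else 0) = 1
  rw [if_pos rfl, if_neg (by omega)]; norm_num

lemma alphaA_apply_succ (i : ℕ) : alphaA i (i+1) = -1 := by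
  show (if i+1 = i then (1:ℤ) else 0) - (if i+1 = i+1 then 1 else 0) = -1
  rw [if_neg (by omega), if_pos rfl]; norm_num

lemma alphaA_apply_of_ne {i j : ℕ} (h1 : j ≠ i) (h2 : j ≠ i+1) : alphaA i j = 0 := by
  show (if j = i then (1:ℤ) else 0) - (if j = i+1 then 1 else 0) = 0
  rw [if_neg h1, if_neg h2]; norm_num

lemma vr_apply' (x y j : ℕ) :
    vr (x, y) j = (if j = x then (1:ℤ) else 0) - (if j = y then 1 else 0) := rfl

lemma vrP_apply (P : ℕ × ℕ) (j : ℕ) :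
    vr P j = (if j = P.1 then (1:ℤ) else 0) - (if j = P.2 then 1 else 0) := rfl

lemma not_vr_ab_eq {a b i : ℕ} {P : ℕ × ℕ} (hai : a < i) (hb : i+1 < b) (hxy : P.1 < P.2)
    (h : vr P + alphaA i = vr (a,b)) : False := by
  have h1 := congrFun h i
  have h2 := congrFun h (i+1)
  have e1 : vr (a,b) i = 0 := by
    rw [vr_apply', if_neg (show ¬ i = a by omega), if_neg (show ¬ i = b by omega)]; norm_num
  have e2 : vr (a,b) (i+1) = 0 := by
    rw [vr_apply', if_neg (show ¬ i+1 = a by omega), if_neg (show ¬ i+1 = b by omega)]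
    norm_num
  rw [Pi.add_apply, alphaA_apply_self, e1, vrP_apply] at h1
  rw [Pi.add_apply, alphaA_apply_succ, e2, vrP_apply] at h2
  split_ifs at h1 h2 <;> omega

lemma not_vr_eta_eq {a i : ℕ} {P : ℕ × ℕ} (hai : a < i) (hxy : P.1 < P.2)
    (h : vr P + alphaA i = vr (a, i)) : False := by
  have h1 := congrFun h i
  have e1 : vr (a,i) i = -1 := by
    rw [vr_apply', if_neg (show ¬ i = a by omega), if_pos rfl]; norm_num
  rw [Pi.add_apply, alphaA_apply_self, e1, vrP_apply] at h1
  split_ifs at h1 <;> omega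

lemma not_ab_plus_alpha {a b i : ℕ} {P : ℕ × ℕ} (hai : a < i) (hb : i+1 < b)
    (h : vr (a,b) + alphaA i = vr P) : False := by
  have h1 := congrFun h a
  have h2 := congrFun h i
  have e1 : vr (a,b) a = 1 := by
    rw [vr_apply', if_pos rfl, if_neg (show ¬ a = b by omega)]; norm_num
  have e2 : vr (a,b) i = 0 := by
    rw [vr_apply', if_neg (show ¬ i = a by omega), if_neg (show ¬ i = b by omega)]; norm_num
  rw [Pi.add_apply, alphaA_apply_of_ne (show a ≠ i by omega) (show a ≠ i+1 by omega),
    e1, vrP_apply] at h1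
  rw [Pi.add_apply, alphaA_apply_self, e2, vrP_apply] at h2
  split_ifs at h1 h2 <;> omega

lemma not_nu_plus_alpha {a i : ℕ} {P : ℕ × ℕ} (hai : a < i)
    (h : vr (a,i+1) + alphaA i = vr P) : False := by
  have h1 := congrFun h (i+1)
  have e1 : vr (a,i+1) (i+1) = -1 := by
    rw [vr_apply', if_neg (show ¬ i+1 = a by omega), if_pos rfl]; norm_num
  rw [Pi.add_apply, alphaA_apply_succ, e1, vrP_apply] at h1
  split_ifs at h1 <;> omega

lemma vr_eq_of_plus_alpha {a i x y : ℕ}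
    (h : vr (x,y) + alphaA i = vr (a,i+1)) : vr (x,y) = vr (a,i) := by
  have h2 : vr (a,i) + alphaA i = vr (a,i+1) := vr_add_alpha
  have := h.trans h2.symm
  exact add_right_cancel this

lemma applyMovesWord_cons (w : List ℕ) (m : BraidMove) (σ : List BraidMove) :
    applyMovesWord w (m :: σ) = applyMovesWord (moveWord w m) σ := rfl

/-- the no-pop invariant: a blocked `η = e_a - e_i` (with `θ = e_a - e_b` strictly between
`η` and `ν = e_a - e_{i+1}`) can never be removed, so the first letter can never become `i`. -/
lemma no_pop {n i a b : ℕ} (hi : 1 ≤ i) (hi2 : i ≤ n) (ha : 1 ≤ a) (hai : a < i)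
    (hb : i+1 < b) (hbn : b ≤ n+1) :
    ∀ (σ : List BraidMove) (w : List ℕ), isReducedWordA n w → validSeqA i w σ →
    (∃ p q r t, p < q ∧ q < r ∧ p < t ∧ r < w.length ∧ t < w.length ∧
      (rootSeqA w).getD p 0 = vr (a, i) ∧
      (rootSeqA w).getD q 0 = vr (a, b) ∧
      (rootSeqA w).getD r 0 = vr (a, i+1) ∧
      (rootSeqA w).getD t 0 = vr (i, i+1)) →
    (applyMovesWord w σ).getD 0 0 ≠ i := by
  intro σ
  induction σ with
  | nil =>
    rintro w hw _ ⟨p, q, r, t, hpq, hqr, hpt, hr, ht, hp', hq', hr', ht'⟩ hfirst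
    have hlen0 : 0 < w.length := by omega
    have hpA0 : pA w 0 = (i, i+1) := by
      rw [pA, uW_zero]
      show (w.getD 0 0, w.getD 0 0 + 1) = (i, i+1)
      have : w.getD 0 0 = i := hfirst
      rw [this]
    have hpAt : pA w t = (i, i+1) := by
      apply vr_inj (Nat.ne_of_lt (pA_lt hw ht)) (by omega)
      rw [← rootSeqA_getD ht, ht']
    have : 0 = t := pA_inj hw hlen0 ht (hpA0 ▸ hpAt.symm)
    omega
  | cons m σ ih =>
    rintro w hw hval ⟨p, q, r, t, hpq, hqr, hpt, hr, ht, hp', hq', hr', ht'⟩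
    obtain ⟨hok, hsemi, hrest⟩ := hval
    rw [applyMovesWord_cons]
    have hw' := reduced_moveWord hw hok
    apply ih (moveWord w m) hw' hrest
    have hplen : p < w.length := by omega
    have hqlen : q < w.length := by omega
    have toPair : ∀ {j : ℕ}, j < w.length → ∀ {P : ℕ × ℕ}, P.1 ≠ P.2 →
        (rootSeqA w).getD j 0 = vr P → pA w j = P := by
      intro j hj P hne hvr
      apply vr_inj (Nat.ne_of_lt (pA_lt hw hj)) hne
      rw [← rootSeqA_getD hj, hvr]
    cases m with
    | two c =>
      obtain ⟨hc, hd⟩ := hok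
      obtain ⟨s0, s1, s2⟩ := seq_moveWord_two hc hd
      have hlen' : (moveWord w (.two c)).length = w.length := moveWord_length _ _
      -- the two swapped crossings share no value
      have hpc : pA w c = (uW w c (w.getD c 0), uW w c (w.getD c 0 + 1)) := rfl
      have hpc1 := pA_succ_of_dist hc hd
      have hinj := (uW w c).injective
      have hkey : ∀ j, j < w.length → (rootSeqA (moveWord w (.two c))).getD (tau2 c j) 0
          = (rootSeqA w).getD j 0 := by
        intro j hj
        by_cases h1 : j = c
        · have : tau2 c j = c+1 := by unfold tau2; simp [h1]
          rw [this, h1, s2]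
        · by_cases h2 : j = c+1
          · have : tau2 c j = c := by unfold tau2; simp [h1, h2]
            rw [this, h2, s1]
          · rw [tau2_eq_of_ne h1 h2, s0 j hj h1 h2]
      -- exclusions: the endpoints of the swapped pair cannot carry our configuration pairs
      have hex1 : ¬(p = c ∧ q = c+1) := by
        rintro ⟨rfl, rfl⟩
        have e1 : pA w p = (a, i) := toPair hplen (by omega) hp'
        have e2 : pA w (p+1) = (a, b) := toPair hqlen (by omega) hq'
        rw [hpc] at e1
        rw [hpc1] at e2
        have f1 : uW w p (w.getD p 0) = a := (Prod.ext_iff.1 e1).1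
        have f2 : uW w p (w.getD (p+1) 0) = a := (Prod.ext_iff.1 e2).1
        have := hinj (f1.trans f2.symm)
        omega
      have hex2 : ¬(q = c ∧ r = c+1) := by
        rintro ⟨rfl, rfl⟩
        have e1 : pA w q = (a, b) := toPair hqlen (by omega) hq'
        have e2 : pA w (q+1) = (a, i+1) := toPair (by omega) (by omega) hr'
        rw [hpc] at e1
        rw [hpc1] at e2
        have f1 : uW w q (w.getD q 0) = a := (Prod.ext_iff.1 e1).1
        have f2 : uW w q (w.getD (q+1) 0) = a := (Prod.ext_iff.1 e2).1
        have := hinj (f1.trans f2.symm)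
        omega
      have hex3 : ¬(p = c ∧ t = c+1) := by
        rintro ⟨rfl, rfl⟩
        have e1 : pA w p = (a, i) := toPair hplen (by omega) hp'
        have e2 : pA w (p+1) = (i, i+1) := toPair (by omega) (by omega) ht'
        rw [hpc] at e1
        rw [hpc1] at e2
        have f1 : uW w p (w.getD p 0 + 1) = i := (Prod.ext_iff.1 e1).2
        have f2 : uW w p (w.getD (p+1) 0) = i := (Prod.ext_iff.1 e2).1
        have := hinj (f1.trans f2.symm)
        omega
      refine ⟨tau2 c p, tau2 c q, tau2 c r, tau2 c t, tau2_lt hpq hex1, tau2_lt hqr hex2,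
        tau2_lt hpt hex3, ?_, ?_, ?_, ?_, ?_, ?_⟩
      · rw [hlen']; exact tau2_bound hr hc
      · rw [hlen']; exact tau2_bound ht hc
      · rw [hkey p hplen]; exact hp'
      · rw [hkey q hqlen]; exact hq'
      · rw [hkey r hr]; exact hr'
      · rw [hkey t ht]; exact ht'
    | three c =>
      obtain ⟨hc, heq, hd⟩ := hok
      obtain ⟨hsem1, hsem2⟩ := hsemi
      obtain ⟨s0, s1, s2, s3⟩ := seq_moveWord_three hc heq hd
      have hlen' : (moveWord w (.three c)).length = w.length := moveWord_length _ _
      have hpc2 : pA w (c+2) = (i, i+1) := toPair (by omega) (by omega) hsem2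
      -- positions of the configuration
      have hPt : pA w t = (i, i+1) := toPair ht (by omega) ht'
      have htc : t = c+2 := pA_inj hw ht (by omega) (hPt.trans hpc2.symm)
      -- the β pair at position c
      have hxylt := pA_lt hw (show c < w.length by omega)
      have hseqc : (rootSeqA w).getD c 0 = vr (pA w c) := rootSeqA_getD (by omega)
      have hE : vr (pA w c) + alphaA i = (rootSeqA w).getD (c+1) 0 := by
        rw [hsem1, hseqc]
      have hseqc1 : (rootSeqA w).getD (c+1) 0 = vr (pA w (c+1)) := rootSeqA_getD (by omega)
      have hxylt1 := pA_lt hw (show c+1 < w.length by omega)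
      -- p is not in the window
      have hp_ne2 : p ≠ c+2 := by
        intro hpe
        have : vr (a, i) = vr (i, i+1) := by rw [← hp', hpe, rootSeqA_getD (show c+2 < w.length by omega), hpc2]
        have := vr_inj (by omega) (by omega) this
        have := (Prod.ext_iff.1 this).1
        omega
      have hp_ne1 : p ≠ c+1 := by
        intro hpe
        exact not_vr_eta_eq hai hxylt (by rw [hE, ← hpe]; exact hp')
      have hp_ne0 : p ≠ c := by
        intro hpe
        -- then seq (c+1) = vr (a, i+1) = seq r with r outside, contradiction via seq_inj
        have hc0 : vr (pA w c) = vr (a, i) := by rw [← hseqc, ← hpe]; exact hp'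
        have hc1 : (rootSeqA w).getD (c+1) 0 = vr (a, i+1) := by
          rw [← hE, hc0, vr_add_alpha]
        have hrc1 : r = c+1 := seq_inj hw hr (by omega) (by rw [hr', hc1])
        -- but q with p < q < r means c < q < c+1, impossible
        omega
      have hplt : p < c := by omega
      -- q is not in the window
      have hq_ne2 : q ≠ c+2 := by
        intro hqe
        have : vr (a, b) = vr (i, i+1) := by rw [← hq', hqe, rootSeqA_getD (show c+2 < w.length by omega), hpc2]
        have := vr_inj (by omega) (by omega) this
        have := (Prod.ext_iff.1 this).1
        omega
      have hq_ne1 : q ≠ c+1 := by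
        intro hqe
        exact not_vr_ab_eq hai hb hxylt (by rw [hE, ← hqe]; exact hq')
      have hq_ne0 : q ≠ c := by
        intro hqe
        apply not_ab_plus_alpha hai hb (P := pA w (c+1))
        rw [← hq', hqe, hseqc, hE, hseqc1]
      -- r is not in the window
      have hr_ne2 : r ≠ c+2 := by
        intro hre
        have : vr (a, i+1) = vr (i, i+1) := by
          rw [← hr', hre, rootSeqA_getD (show c+2 < w.length by omega), hpc2]
        have := vr_inj (by omega) (by omega) this
        have := (Prod.ext_iff.1 this).1
        omega
      have hr_ne1 : r ≠ c+1 := by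
        intro hre
        have hEr : vr (pA w c) + alphaA i = vr (a, i+1) := by
          rw [hE, ← hre, hr']
        have : vr (pA w c) = vr (a, i) := vr_eq_of_plus_alpha hEr
        have hpeq : pA w c = (a, i) := vr_inj (by omega) (by omega) this
        have : c = p := seq_inj hw (by omega) hplen (by rw [hseqc, hpeq, hp'])
        omega
      have hr_ne0 : r ≠ c := by
        intro hre
        apply not_nu_plus_alpha hai (P := pA w (c+1))
        rw [← hr', hre, hseqc, hE, hseqc1]
      refine ⟨p, q, r, c, hpq, hqr, hplt, ?_, ?_, ?_, ?_, ?_, ?_⟩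
      · rw [hlen']; omega
      · rw [hlen']; omega
      · rw [s0 p hplen (by omega) (by omega) (by omega)]; exact hp'
      · rw [s0 q hqlen hq_ne0 hq_ne1 hq_ne2]; exact hq'
      · rw [s0 r hr hr_ne0 hr_ne1 hr_ne2]; exact hr'
      · rw [s1, ← htc]; exact ht'

end St9
namespace St9

lemma getD_take {α : Type*} (d : α) (l : List α) {m j : ℕ} (h : j < m) :
    (l.take m).getD j d = l.getD j d := by
  rw [List.getD_eq_getElem?_getD, List.getD_eq_getElem?_getD, List.getElem?_take_of_lt h]

lemma getD_drop {α : Type*} (d : α) (l : List α) (m j : ℕ) :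
    (l.drop m).getD j d = l.getD (m + j) d := by
  rw [List.getD_eq_getElem?_getD, List.getD_eq_getElem?_getD, List.getElem?_drop]

lemma take_succ_getD {α : Type*} (d : α) (l : List α) {m : ℕ} (h : m < l.length) :
    l.take (m+1) = l.take m ++ [l.getD m d] := by
  rw [List.take_succ]
  congr 1
  rw [List.getD_eq_getElem?_getD, List.getElem?_eq_getElem h]
  rfl

lemma length_take_of_le {α : Type*} {l : List α} {m : ℕ} (h : m ≤ l.length) :
    (l.take m).length = m := by
  rw [List.length_take]; omega

/-- the position of `α_i` in the root sequence, with the resulting shape of `etaListA` -/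
lemma alpha_pos {n i : ℕ} {w : List ℕ} (hw : isReducedWordA n w) (hi : 1 ≤ i) (hi2 : i ≤ n) :
    ∃ T, T < w.length ∧ pA w T = (i, i+1) ∧
      (rootSeqA w).getD T 0 = alphaA i ∧
      (∀ j, j < w.length → (rootSeqA w).getD j 0 = alphaA i → j = T) ∧
      etaListA n i w = ((rootSeqA w).take T).filter
        (fun η => decide (ipA n (alphaA i) η < 0)) := by
  obtain ⟨T, hT, hTp⟩ := pA_surj hw (p := (i, i+1)) (mem_pairsF.2 ⟨hi, by omega, by omega⟩)
  have hTα : (rootSeqA w).getD T 0 = alphaA i := by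
    rw [rootSeqA_getD hT, hTp, alphaA_eq_vr]
  have huniq : ∀ j, j < w.length → (rootSeqA w).getD j 0 = alphaA i → j = T := by
    intro j hj hjα
    exact seq_inj hw hj hT (by rw [hjα, hTα])
  refine ⟨T, hT, hTp, hTα, huniq, ?_⟩
  rw [etaListA]
  congr 1
  apply takeWhile_eq_take' _ (0 : ℕ → ℤ) _ T (by rw [rootSeqA_length]; omega)
  · intro j hj
    simp only [decide_eq_true_eq]
    intro hcon
    have := huniq j (by omega) hcon
    omega
  · intro _
    simp only [decide_eq_false_iff_not, ne_eq, not_not]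
    exact hTα

/-- pairs that do not touch `i, i+1` are not etas -/
lemma not_eta_of_disj {n i x y : ℕ} (hi2 : i ≤ n) (h1 : x ≠ i) (h2 : x ≠ i+1)
    (h3 : y ≠ i) (h4 : y ≠ i+1) :
    decide (ipA n (alphaA i) (vr (x, y)) < 0) = false := by
  simp only [decide_eq_false_iff_not, not_lt]
  rw [ipA_alphaA hi2, vr_apply', vr_apply', if_neg (show ¬ i = x by omega),
    if_neg (show ¬ i = y by omega), if_neg (show ¬ i+1 = x by omega),
    if_neg (show ¬ i+1 = y by omega)]
  norm_num

/-- setup for applying `no_pop` after a 2-move that would swap two etas -/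
lemma no_pop_setup {n i : ℕ} {w' : List ℕ} (hi : 1 ≤ i) (hi2 : i ≤ n)
    (hw' : isReducedWordA n w') {a b c T : ℕ}
    (ha : 1 ≤ a) (hai : a < i) (hb : i+1 < b) (hbn : b ≤ n+1)
    {pL pR : ℕ}
    (hpLc : pL = c ∨ pL = c+1) (hpRc : pR = c ∨ pR = c+1) (hne : pL ≠ pR)
    (hpL : pL < w'.length) (hpR : pR < w'.length)
    (hPL : pA w' pL = (a, i)) (hPR : pA w' pR = (i+1, b))
    (hT : T < w'.length) (hTp : pA w' T = (i, i+1)) (hTc : c+1 < T)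
    (σ' : List BraidMove) (hrest : validSeqA i w' σ') :
    (applyMovesWord w' σ').getD 0 0 ≠ i := by
  obtain ⟨R1, hR1, hR1p⟩ := pA_surj hw' (p := (a, i+1)) (mem_pairsF.2 ⟨by omega, by omega, by omega⟩)
  obtain ⟨R2, hR2, hR2p⟩ := pA_surj hw' (p := (i, b)) (mem_pairsF.2 ⟨by omega, by omega, by omega⟩)
  obtain ⟨Q, hQ, hQp⟩ := pA_surj hw' (p := (a, b)) (mem_pairsF.2 ⟨by omega, by omega, by omega⟩)
  have B1 := between hw' hpL hT hR1 hPL hTp hR1p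
  have B2 := between hw' hT hpR hR2 hTp hPR hR2p
  have B3 := between hw' hR1 hpR hQ hR1p hPR hQp
  have hR1L : R1 ≠ pL := fun h => by
    rw [h, hPL] at hR1p
    exact absurd (Prod.ext_iff.1 hR1p).2 (by omega)
  have hR1R : R1 ≠ pR := fun h => by
    rw [h, hPR] at hR1p
    exact absurd (Prod.ext_iff.1 hR1p).1 (by omega)
  have hQL : Q ≠ pL := fun h => by
    rw [h, hPL] at hQp
    exact absurd (Prod.ext_iff.1 hQp).2 (by omega)
  have hQR : Q ≠ pR := fun h => by
    rw [h, hPR] at hQp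
    exact absurd (Prod.ext_iff.1 hQp).1 (by omega)
  have hkey1 : pL < R1 ∧ R1 < T := by omega
  have hkey3 : pR < Q ∧ Q < R1 := by omega
  apply no_pop hi hi2 ha hai hb hbn σ' w' hw' hrest
  refine ⟨pL, Q, R1, T, by omega, by omega, by omega, hR1, hT, ?_, ?_, ?_, ?_⟩
  · rw [rootSeqA_getD hpL, hPL]
  · rw [rootSeqA_getD hQ, hQp]
  · rw [rootSeqA_getD hR1, hR1p]
  · rw [rootSeqA_getD hT, hTp]

end St9
namespace St9

lemma filter_singleton_true {α : Type*} (p : α → Bool) (x : α) (h : p x = true) :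
    [x].filter p = [x] := by
  simp [List.filter_cons, h]

lemma filter_singleton_false {α : Type*} (p : α → Bool) (x : α) (h : p x = false) :
    [x].filter p = [] := by
  simp [List.filter_cons, h]

lemma etaList_three {n i : ℕ} {w : List ℕ} {c : ℕ} (hi : 1 ≤ i) (hi2 : i ≤ n)
    (hw : isReducedWordA n w) (hc : c + 2 < w.length)
    (heq : w.getD (c+2) 0 = w.getD c 0)
    (hd : w.getD c 0 + 1 = w.getD (c+1) 0 ∨ w.getD (c+1) 0 + 1 = w.getD c 0)
    (hsem1 : (rootSeqA w).getD (c+1) 0 = (rootSeqA w).getD c 0 + alphaA i)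
    (hsem2 : (rootSeqA w).getD (c+2) 0 = alphaA i) :
    etaListA n i w = etaListA n i (moveWord w (.three c)) ++ [(rootSeqA w).getD c 0] := by
  have hok : moveOKA w (.three c) := ⟨hc, heq, hd⟩
  have hw' := reduced_moveWord hw hok
  have hlen' : (moveWord w (.three c)).length = w.length := moveWord_length _ _
  obtain ⟨T, hT, hTp, hTα, huniq, hch⟩ := alpha_pos hw hi hi2
  obtain ⟨T', hT', hTp', hTα', huniq', hch'⟩ := alpha_pos hw' hi hi2
  obtain ⟨s0, s1, s2, s3⟩ := seq_moveWord_three hc heq hd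
  have hTc : T = c+2 := (huniq (c+2) (by omega) hsem2).symm
  have hT'c : T' = c := (huniq' c (by rw [hlen']; omega) (by rw [s1]; exact hsem2)).symm
  -- identify the values of `uW w c` on the middle letter
  have hu'c : uW (moveWord w (.three c)) c = uW w c := by
    rw [moveWord_three_eq hc, uW_of_append_le _ _ _ (by rw [length_take_of_le (by omega)])]
    rw [uW, uW, List.take_take, Nat.min_self]
  have hg'c : (moveWord w (.three c)).getD c 0 = w.getD (c+1) 0 := by
    rw [moveWord_three_eq hc,
      getD_of_append_geG _ _ _ _ (by rw [length_take_of_le (by omega)]),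
      length_take_of_le (by omega), Nat.sub_self]
    rfl
  have hpc2 : pA w (c+2) = (i, i+1) := by
    apply vr_inj (Nat.ne_of_lt (pA_lt hw (by omega))) (by omega)
    rw [← rootSeqA_getD (show c+2 < w.length by omega), hsem2, alphaA_eq_vr]
  have hb'val : uW w c (w.getD (c+1) 0) = i ∧ uW w c (w.getD (c+1) 0 + 1) = i+1 := by
    obtain ⟨_, h1, _, _⟩ := pA_moveWord_three hc heq hd
    have hthis : pA (moveWord w (.three c)) c = (i, i+1) := by rw [h1, hpc2]
    rw [pA, hu'c, hg'c] at hthis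
    exact ⟨(Prod.ext_iff.1 hthis).1, (Prod.ext_iff.1 hthis).2⟩
  have hxy := pA_lt hw (show c < w.length by omega)
  have hseqc : (rootSeqA w).getD c 0 = vr (pA w c) := rootSeqA_getD (by omega)
  have hseqc1 : (rootSeqA w).getD (c+1) 0 = vr (pA w c) + alphaA i := by rw [hsem1, hseqc]
  have hβν : decide (ipA n (alphaA i) ((rootSeqA w).getD c 0) < 0) = true ∧
      decide (ipA n (alphaA i) ((rootSeqA w).getD (c+1) 0) < 0) = false := by
    rcases hd with hd | hd
    · have h2 : (pA w c).2 = i := by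
        show uW w c (w.getD c 0 + 1) = i
        rw [hd]
        exact hb'val.1
      have hpair : pA w c = ((pA w c).1, i) := Prod.ext rfl h2
      constructor
      · rw [hseqc, show vr (pA w c) = vr ((pA w c).1, i) from by rw [← hpair]]
        simp only [decide_eq_true_eq]
        exact ip_form1 hi2 (by omega)
      · rw [hseqc1, show vr (pA w c) = vr ((pA w c).1, i) from by rw [← hpair], vr_add_alpha]
        simp only [decide_eq_false_iff_not, not_lt]
        have := ip_nu1 (x := (pA w c).1) hi2 (by omega)
        omega
    · have h1 : (pA w c).1 = i+1 := by
        show uW w c (w.getD c 0) = i+1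
        rw [← hd]
        exact hb'val.2
      have hpair : pA w c = (i+1, (pA w c).2) := Prod.ext h1 rfl
      constructor
      · rw [hseqc, show vr (pA w c) = vr (i+1, (pA w c).2) from by rw [← hpair]]
        simp only [decide_eq_true_eq]
        exact ip_form2 hi2 (by omega)
      · rw [hseqc1, show vr (pA w c) = vr (i+1, (pA w c).2) from by rw [← hpair], vr_add_alpha']
        simp only [decide_eq_false_iff_not, not_lt]
        have := ip_nu2 (y := (pA w c).2) hi2 (by omega)
        omega
  rw [hch, hch', hTc, hT'c]
  have ht3 : (rootSeqA (moveWord w (.three c))).take c = (rootSeqA w).take c := by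
    apply eq_of_getD (0:ℕ→ℤ)
    · rw [List.length_take, List.length_take, rootSeqA_length, rootSeqA_length, hlen']
    · intro j hj
      rw [List.length_take, rootSeqA_length] at hj
      have hjc : j < c := by omega
      rw [getD_take _ _ hjc, getD_take _ _ hjc, s0 j (by omega) (by omega) (by omega) (by omega)]
  have e2 : c + 2 = (c+1) + 1 := rfl
  rw [e2, take_succ_getD (0:ℕ→ℤ) (rootSeqA w)
      (show c+1 < (rootSeqA w).length by rw [rootSeqA_length]; omega),
    take_succ_getD (0:ℕ→ℤ) (rootSeqA w)
      (show c < (rootSeqA w).length by rw [rootSeqA_length]; omega),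
    ht3, List.filter_append, List.filter_append]
  rw [filter_singleton_true (fun η => decide (ipA n (alphaA i) η < 0))
      ((rootSeqA w).getD c 0) hβν.1,
    filter_singleton_false (fun η => decide (ipA n (alphaA i) η < 0))
      ((rootSeqA w).getD (c+1) 0) hβν.2]
  simp

end St9
namespace St9

lemma filter_swap_adj {α : Type*} (p : α → Bool) (A B : List α) (x y : α)
    (h : ¬(p x = true ∧ p y = true)) :
    (A ++ y :: x :: B).filter p = (A ++ x :: y :: B).filter p := by
  rcases Bool.eq_false_or_eq_true (p x) with hx | hx <;>
    rcases Bool.eq_false_or_eq_true (p y) with hy | hy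
  · exact absurd ⟨hx, hy⟩ h
  · simp [List.filter_append, List.filter_cons, hx, hy]
  · simp [List.filter_append, List.filter_cons, hx, hy]
  · simp [List.filter_append, List.filter_cons, hx, hy]

lemma etaList_two {n i : ℕ} {w : List ℕ} {c : ℕ} (hi : 1 ≤ i) (hi2 : i ≤ n)
    (hw : isReducedWordA n w) (hc : c + 1 < w.length)
    (hd : w.getD c 0 + 2 ≤ w.getD (c+1) 0 ∨ w.getD (c+1) 0 + 2 ≤ w.getD c 0)
    {σ' : List BraidMove}
    (hrest : validSeqA i (moveWord w (.two c)) σ')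
    (hfirst : (applyMovesWord (moveWord w (.two c)) σ').getD 0 0 = i) :
    etaListA n i (moveWord w (.two c)) = etaListA n i w := by
  have hok : moveOKA w (.two c) := ⟨hc, hd⟩
  have hw' := reduced_moveWord hw hok
  have hlen' : (moveWord w (.two c)).length = w.length := moveWord_length _ _
  obtain ⟨T, hT, hTp, hTα, huniq, hch⟩ := alpha_pos hw hi hi2
  obtain ⟨T', hT', hTp', hTα', huniq', hch'⟩ := alpha_pos hw' hi hi2
  obtain ⟨s0, s1, s2⟩ := seq_moveWord_two hc hd
  obtain ⟨p0, p1, p2⟩ := pA_moveWord_two hc hd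
  have hu := pA_succ_of_dist hc hd
  have huinj := (uW w c).injective
  have hP1 : pA w c = (uW w c (w.getD c 0), uW w c (w.getD c 0 + 1)) := rfl
  have hlt1 : uW w c (w.getD c 0) < uW w c (w.getD c 0 + 1) := pA_lt hw (by omega)
  have hlt2 : uW w c (w.getD (c+1) 0) < uW w c (w.getD (c+1) 0 + 1) := by
    have h := pA_lt hw hc
    rw [hu] at h
    exact h
  have htake_c : (rootSeqA (moveWord w (.two c))).take c = (rootSeqA w).take c := by
    apply eq_of_getD (0:ℕ→ℤ)
    · rw [List.length_take, List.length_take, rootSeqA_length, rootSeqA_length, hlen']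
    · intro j hj
      rw [List.length_take, rootSeqA_length] at hj
      have hjc : j < c := by omega
      rw [getD_take _ _ hjc, getD_take _ _ hjc, s0 j (by omega) (by omega) (by omega)]
  by_cases hTc : T = c
  · have hT'v : T' = c+1 :=
      (huniq' (c+1) (by rw [hlen']; omega) (by rw [s2, ← hTc]; exact hTα)).symm
    have hic : pA w c = (i, i+1) := by rw [← hTc]; exact hTp
    have hia : uW w c (w.getD c 0) = i := (Prod.ext_iff.1 hic).1
    have hib : uW w c (w.getD c 0 + 1) = i+1 := (Prod.ext_iff.1 hic).2
    have hγ : (rootSeqA (moveWord w (.two c))).getD c 0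
        = vr (uW w c (w.getD (c+1) 0), uW w c (w.getD (c+1) 0 + 1)) := by
      rw [s1, rootSeqA_getD hc, hu]
    have hγfalse : decide (ipA n (alphaA i)
        ((rootSeqA (moveWord w (.two c))).getD c 0) < 0) = false := by
      rw [hγ]
      apply not_eta_of_disj hi2
      · intro h; rw [← hia] at h; have := huinj h; omega
      · intro h; rw [← hib] at h; have := huinj h; omega
      · intro h; rw [← hia] at h; have := huinj h; omega
      · intro h; rw [← hib] at h; have := huinj h; omega
    rw [hch, hch', hT'v, hTc]
    rw [take_succ_getD (0:ℕ→ℤ) (rootSeqA (moveWord w (.two c)))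
      (show c < (rootSeqA (moveWord w (.two c))).length by rw [rootSeqA_length, hlen']; omega)]
    rw [htake_c, List.filter_append,
      filter_singleton_false (fun η => decide (ipA n (alphaA i) η < 0)) _ hγfalse]
    simp
  · by_cases hTc1 : T = c+1
    · have hT'v : T' = c :=
        (huniq' c (by rw [hlen']; omega) (by rw [s1, ← hTc1]; exact hTα)).symm
      have hic : pA w (c+1) = (i, i+1) := by rw [← hTc1]; exact hTp
      rw [hu] at hic
      have hia : uW w c (w.getD (c+1) 0) = i := (Prod.ext_iff.1 hic).1
      have hib : uW w c (w.getD (c+1) 0 + 1) = i+1 := (Prod.ext_iff.1 hic).2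
      have hγ : (rootSeqA w).getD c 0
          = vr (uW w c (w.getD c 0), uW w c (w.getD c 0 + 1)) := rootSeqA_getD (by omega)
      have hγfalse : decide (ipA n (alphaA i) ((rootSeqA w).getD c 0) < 0) = false := by
        rw [hγ]
        apply not_eta_of_disj hi2
        · intro h; rw [← hia] at h; have := huinj h; omega
        · intro h; rw [← hib] at h; have := huinj h; omega
        · intro h; rw [← hia] at h; have := huinj h; omega
        · intro h; rw [← hib] at h; have := huinj h; omega
      rw [hch, hch', hT'v, hTc1]
      rw [take_succ_getD (0:ℕ→ℤ) (rootSeqA w)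
        (show c < (rootSeqA w).length by rw [rootSeqA_length]; omega)]
      rw [htake_c, List.filter_append,
        filter_singleton_false (fun η => decide (ipA n (alphaA i) η < 0)) _ hγfalse]
      simp
    · by_cases hTlt : T < c
      · have hT'v : T' = T :=
          (huniq' T (by rw [hlen']; omega)
            (by rw [s0 T (by omega) (by omega) (by omega)]; exact hTα)).symm
        rw [hch, hch', hT'v]
        congr 1
        apply eq_of_getD (0:ℕ→ℤ)
        · rw [List.length_take, List.length_take, rootSeqA_length, rootSeqA_length, hlen']
        · intro j hj
          rw [List.length_take, rootSeqA_length] at hj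
          have hjT : j < T := by omega
          rw [getD_take _ _ hjT, getD_take _ _ hjT, s0 j (by omega) (by omega) (by omega)]
      · have hTgt : c+1 < T := by omega
        have hT'v : T' = T :=
          (huniq' T (by rw [hlen']; omega)
            (by rw [s0 T (by omega) (by omega) (by omega)]; exact hTα)).symm
        by_cases hboth : decide (ipA n (alphaA i) ((rootSeqA w).getD c 0) < 0) = true
            ∧ decide (ipA n (alphaA i) ((rootSeqA w).getD (c+1) 0) < 0) = true
        · exfalso
          have e1 : (uW w c (w.getD c 0 + 1) = i ∧ uW w c (w.getD c 0) < i)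
              ∨ (uW w c (w.getD c 0) = i+1 ∧ i+1 < uW w c (w.getD c 0 + 1)) := by
            apply eta_form hi2 hlt1
            have h := of_decide_eq_true hboth.1
            rw [rootSeqA_getD (show c < w.length by omega)] at h
            exact h
          have e2 : (uW w c (w.getD (c+1) 0 + 1) = i ∧ uW w c (w.getD (c+1) 0) < i)
              ∨ (uW w c (w.getD (c+1) 0) = i+1 ∧ i+1 < uW w c (w.getD (c+1) 0 + 1)) := by
            apply eta_form hi2 hlt2
            have h := of_decide_eq_true hboth.2
            rw [rootSeqA_getD hc, hu] at h
            exact h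
          have m1 := mem_pairsF.1 (pA_mem_pairsF hw (show c < w.length by omega))
          have m1a : 1 ≤ uW w c (w.getD c 0) := m1.1
          have m1c : uW w c (w.getD c 0 + 1) ≤ n+1 := m1.2.2
          have m2 := mem_pairsF.1 (pA_mem_pairsF hw hc)
          rw [hu] at m2
          have m2a : 1 ≤ uW w c (w.getD (c+1) 0) := m2.1
          have m2c : uW w c (w.getD (c+1) 0 + 1) ≤ n+1 := m2.2.2
          have hTw' : T < (moveWord w (.two c)).length := by rw [hlen']; omega
          have hTp'' : pA (moveWord w (.two c)) T = (i, i+1) := by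
            rw [p0 T (by omega) (by omega)]; exact hTp
          rcases e1 with ⟨f1, f2⟩ | ⟨f1, f2⟩ <;> rcases e2 with ⟨g1, g2⟩ | ⟨g1, g2⟩
          · have := huinj (f1.trans g1.symm)
            omega
          · -- P1 = (·, i) form, P2 = (i+1, ·) form
            have hPL : pA (moveWord w (.two c)) (c+1) = (uW w c (w.getD c 0), i) := by
              rw [p2]; exact Prod.ext rfl f1
            have hPR : pA (moveWord w (.two c)) c
                = (i+1, uW w c (w.getD (c+1) 0 + 1)) := by
              rw [p1, hu]; exact Prod.ext g1 rfl
            exact absurd hfirst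
              (no_pop_setup hi hi2 hw' m1a f2 g2 m2c (Or.inr rfl) (Or.inl rfl) (by omega)
                (by rw [hlen']; omega) (by rw [hlen']; omega) hPL hPR hTw' hTp'' hTgt σ' hrest)
          · -- P1 = (i+1, ·) form, P2 = (·, i) form
            have hPL : pA (moveWord w (.two c)) c = (uW w c (w.getD (c+1) 0), i) := by
              rw [p1, hu]; exact Prod.ext rfl g1
            have hPR : pA (moveWord w (.two c)) (c+1)
                = (i+1, uW w c (w.getD c 0 + 1)) := by
              rw [p2]; exact Prod.ext f1 rfl
            exact absurd hfirst
              (no_pop_setup hi hi2 hw' m2a g2 f2 m1c (Or.inl rfl) (Or.inr rfl) (by omega)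
                (by rw [hlen']; omega) (by rw [hlen']; omega) hPL hPR hTw' hTp'' hTgt σ' hrest)
          · have := huinj (f1.trans g1.symm)
            omega
        · -- not both etas: filters equal
          have hLlen : ((rootSeqA w).take T).length = T := by
            rw [List.length_take, rootSeqA_length]; omega
          have hLlen' : ((rootSeqA (moveWord w (.two c))).take T).length = T := by
            rw [List.length_take, rootSeqA_length, hlen']; omega
          set B := ((rootSeqA w).take T).drop (c+2) with hBdef
          have hdL : (rootSeqA w).take T
              = (rootSeqA w).take c ++ (rootSeqA w).getD c 0
                :: (rootSeqA w).getD (c+1) 0 :: B := by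
            have h0 := self_eq_twoG (0:ℕ→ℤ) (w := (rootSeqA w).take T) (k := c)
              (by rw [hLlen]; omega)
            rw [List.take_take, getD_take _ _ (by omega), getD_take _ _ (by omega)] at h0
            rw [show min c T = c by omega] at h0
            exact h0
          have hdL' : (rootSeqA (moveWord w (.two c))).take T
              = (rootSeqA w).take c ++ (rootSeqA w).getD (c+1) 0
                :: (rootSeqA w).getD c 0 :: B := by
            have h0 := self_eq_twoG (0:ℕ→ℤ)
              (w := (rootSeqA (moveWord w (.two c))).take T) (k := c)
              (by rw [hLlen']; omega)
            rw [List.take_take, getD_take _ _ (by omega), getD_take _ _ (by omega)] at h0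
            rw [show min c T = c by omega, htake_c, s1, s2] at h0
            rw [h0]
            congr 3
            apply eq_of_getD (0:ℕ→ℤ)
            · rw [List.length_drop, List.length_drop, hLlen, hLlen']
            · intro j hj
              rw [List.length_drop, hLlen] at hj
              rw [getD_drop, getD_drop, getD_take _ _ (by omega), getD_take _ _ (by omega),
                s0 (c+2+j) (by omega) (by omega) (by omega)]
          rw [hch, hch', hT'v, hdL', hdL]
          exact filter_swap_adj _ _ _ _ _ hboth

end St9
namespace St9

lemma threeTriplesA_nil (w : List ℕ) : threeTriplesA w [] = [] := rfl

lemma threeTriplesA_two (w : List ℕ) (c : ℕ) (σ : List BraidMove) :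
    threeTriplesA w (.two c :: σ) = threeTriplesA (moveWord w (.two c)) σ := rfl

lemma threeTriplesA_three (w : List ℕ) (c : ℕ) (σ : List BraidMove) :
    threeTriplesA w (.three c :: σ) =
      ((rootSeqA w).getD c 0, (rootSeqA w).getD (c+1) 0, (rootSeqA w).getD (c+2) 0)
        :: threeTriplesA (moveWord w (.three c)) σ := rfl

lemma main_ind {n i : ℕ} (hn : 1 ≤ n) (hi : 1 ≤ i) (hi2 : i ≤ n) :
    ∀ (σ : List BraidMove) (w : List ℕ), isReducedWordA n w → validSeqA i w σ →
    (applyMovesWord w σ).getD 0 0 = i →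
    threeTriplesA w σ =
      ((etaListA n i w).reverse).map (fun η => (η, η + alphaA i, alphaA i)) := by
  intro σ
  induction σ with
  | nil =>
    intro w hw _ hfirst
    have hlen0 : 0 < w.length := by
      have h2 := hw.2.1
      have h3 : 2 ≤ n * (n+1) := by
        calc 2 = 1 * 2 := by norm_num
        _ ≤ n * (n+1) := Nat.mul_le_mul hn (by omega)
      omega
    have hfirst' : w.getD 0 0 = i := hfirst
    have h0 : (rootSeqA w).getD 0 0 = alphaA i := by
      rw [rootSeqA_getD hlen0]
      show vr (uW w 0 (w.getD 0 0), uW w 0 (w.getD 0 0 + 1)) = alphaA i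
      rw [uW_zero]
      rw [show (1 : Equiv.Perm ℕ) (w.getD 0 0) = w.getD 0 0 from rfl,
        show (1 : Equiv.Perm ℕ) (w.getD 0 0 + 1) = w.getD 0 0 + 1 from rfl,
        hfirst', alphaA_eq_vr]
    obtain ⟨T, hT, hTp, hTα, huniq, hch⟩ := alpha_pos hw hi hi2
    have hT0 : T = 0 := (huniq 0 hlen0 h0).symm
    rw [threeTriplesA_nil, hch, hT0]
    simp
  | cons m σ ih =>
    intro w hw hval hfirst
    obtain ⟨hok, hsemi, hrest⟩ := hval
    rw [applyMovesWord_cons] at hfirst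
    have hw' := reduced_moveWord hw hok
    have IH := ih (moveWord w m) hw' hrest hfirst
    cases m with
    | two c =>
      obtain ⟨hc, hd⟩ := hok
      rw [threeTriplesA_two, IH, etaList_two hi hi2 hw hc hd hrest hfirst]
    | three c =>
      obtain ⟨hc, heq, hd⟩ := hok
      obtain ⟨hsem1, hsem2⟩ := hsemi
      rw [threeTriplesA_three, hsem2, hsem1, IH,
        etaList_three hi hi2 hw hc heq hd hsem1 hsem2]
      rw [List.reverse_append]
      simp

end St9
/-- In any sequence of braid moves allowed by `i`-semi-adaptedness, taking a
reduced word `w` for `w₀` to a word whose first letter is `i`, there are exactly `k` 3-term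
braid moves (`k` = number of `η`'s), and they occur at the root triples
`(η_k, ν_k, α_i)`, then `(η_(k-1), ν_(k-1), α_i)`, …, then `(η_1, ν_1, α_i)`. -/
theorem statement9 (n i : ℕ) (hn : 1 ≤ n) (hi1 : 1 ≤ i) (hi2 : i ≤ n)
    (w : List ℕ) (hw : isReducedWordA n w)
    (σ : List BraidMove) (hσ : validSeqA i w σ)
    (hfirst : (applyMovesWord w σ).getD 0 0 = i) :
    threeTriplesA w σ =
      ((etaListA n i w).reverse).map (fun η => (η, η + alphaA i, alphaA i)) := by
  exact St9.main_ind hn hi1 hi2 σ w hw hσ hfirst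

end
end
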